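/- arXiv:1907.12536 — 6 statements merged into one kernel-verified Lean document; each statement's English description precedes it below -/
import Mathlib

section
/- Let f be a polynomial vector field on ℂ^n, let K = ℂ(x_1,…,x_n), let L be a field extension of K equipped with a derivation D extending X_f, and let σ ∈ L be nonconstant, algebraic over K, and satisfy D(σ) = μ·σ for some polynomial μ. Write T^m + β_1 T^{m−1} + ⋯ + β_m ∈ K[T] for the minimal polynomial of σ. Then for every index k with β_k ≠ 0 one has X_f(β_k) = k·μ·β_k. -/
open MvPolynomial

noncomputable section

/-- The rational function field `K = ℂ(x_1,…,x_n)`. -/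
abbrev RatFunField (n : ℕ) : Type := FractionRing (MvPolynomial (Fin n) ℂ)

/-- The Lie derivative (derivation) `X_f(ψ) = Σ_k f_k · ∂ψ/∂x_k` associated to the
polynomial vector field `f` on `ℂ^n`. -/
def lieD (n : ℕ) (f : Fin n → MvPolynomial (Fin n) ℂ) (ψ : MvPolynomial (Fin n) ℂ) :
    MvPolynomial (Fin n) ℂ :=
  ∑ k, f k * pderiv k ψ

set_option maxHeartbeats 1000000 in
set_option synthInstance.maxHeartbeats 400000 in
/-- If `σ`, lying in a field extension `L` of `K = ℂ(x_1,…,x_n)` with a derivation `DL`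
extending the extension `DK` of `X_f` to `K`, is nonconstant, algebraic over `K`, and
satisfies `DL σ = μ·σ` for a polynomial `μ`, and `T^m + β_1 T^{m-1} + ⋯ + β_m` is the
minimal polynomial of `σ` over `K`, then every nonzero coefficient `β_k` satisfies
`X_f(β_k) = k·μ·β_k`. -/
theorem stmt1 (n : ℕ) (f : Fin n → MvPolynomial (Fin n) ℂ)
    (L : Type) [Field L] [Algebra (RatFunField n) L]
    (DK : Derivation ℤ (RatFunField n) (RatFunField n))
    (hDK : ∀ p : MvPolynomial (Fin n) ℂ,
      DK (algebraMap (MvPolynomial (Fin n) ℂ) (RatFunField n) p) =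
        algebraMap (MvPolynomial (Fin n) ℂ) (RatFunField n) (lieD n f p))
    (DL : Derivation ℤ L L)
    (hDL : ∀ a : RatFunField n,
      DL (algebraMap (RatFunField n) L a) = algebraMap (RatFunField n) L (DK a))
    (σ : L) (halg : IsAlgebraic (RatFunField n) σ)
    (hnc : ∀ c : ℂ, σ ≠ algebraMap (RatFunField n) L
      (algebraMap (MvPolynomial (Fin n) ℂ) (RatFunField n) (C c)))
    (μ : MvPolynomial (Fin n) ℂ)
    (hσ : DL σ =
      algebraMap (RatFunField n) L (algebraMap (MvPolynomial (Fin n) ℂ) (RatFunField n) μ) * σ) :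
    ∀ k : ℕ, 1 ≤ k → k ≤ (minpoly (RatFunField n) σ).natDegree →
      (minpoly (RatFunField n) σ).coeff ((minpoly (RatFunField n) σ).natDegree - k) ≠ 0 →
      DK ((minpoly (RatFunField n) σ).coeff ((minpoly (RatFunField n) σ).natDegree - k)) =
        (k : RatFunField n) * algebraMap (MvPolynomial (Fin n) ℂ) (RatFunField n) μ *
          (minpoly (RatFunField n) σ).coeff ((minpoly (RatFunField n) σ).natDegree - k) := by
  classical
  intro k hk1 hk2 hne
  set K := RatFunField n with hK
  have hint : IsIntegral K σ := halg.isIntegral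
  set P : Polynomial K := minpoly K σ with hPdef
  set m : ℕ := P.natDegree with hm
  set μK : K := algebraMap (MvPolynomial (Fin n) ℂ) K μ with hμK
  set μL : L := algebraMap K L μK with hμL
  set Q : Polynomial K := ∑ i ∈ Finset.range (m+1),
    Polynomial.C (DK (P.coeff i) - ((m : K) - (i : K)) * μK * P.coeff i) * Polynomial.X ^ i
    with hQdef
  have hcoeffQ : ∀ j, Q.coeff j =
      if j ≤ m then DK (P.coeff j) - ((m : K) - (j : K)) * μK * P.coeff j else 0 := by
    intro j
    rw [hQdef, Polynomial.finset_sum_coeff]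
    simp only [Polynomial.coeff_C_mul, Polynomial.coeff_X_pow, mul_ite, mul_one, mul_zero]
    rw [Finset.sum_ite_eq (Finset.range (m+1)) j]
    simp [Finset.mem_range, Nat.lt_succ_iff]
  -- key sum identity from differentiating the minimal polynomial
  have hPeval : (∑ i ∈ Finset.range (m+1), P.coeff i • σ ^ i) = 0 := by
    rw [← Polynomial.aeval_eq_sum_range]; exact minpoly.aeval K σ
  have hPeval' : (∑ i ∈ Finset.range (m+1), algebraMap K L (P.coeff i) * σ ^ i) = 0 := by
    rw [← hPeval]; exact Finset.sum_congr rfl fun i _ => by rw [Algebra.smul_def]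
  have hderiv : ∑ i ∈ Finset.range (m+1),
      (algebraMap K L (DK (P.coeff i)) * σ ^ i
        + (i : L) * μL * (algebraMap K L (P.coeff i) * σ ^ i)) = 0 := by
    have h := congrArg DL hPeval
    rw [map_zero, map_sum] at h
    rw [← h]
    apply Finset.sum_congr rfl
    intro i _
    rw [Algebra.smul_def, Derivation.leibniz, smul_eq_mul, smul_eq_mul, hDL,
      Derivation.leibniz_pow, hσ]
    rcases Nat.eq_zero_or_pos i with h0 | hpos
    · subst h0; simp; rfl
    · have hpow : σ ^ (i-1) * σ = σ ^ i := by
        rw [← pow_succ, Nat.sub_add_cancel hpos]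
      simp only [smul_eq_mul, nsmul_eq_mul]
      rw [← hpow]; ring
  have haevalQ : Polynomial.aeval σ Q = 0 := by
    rw [hQdef, map_sum]
    have hterm : ∀ i ∈ Finset.range (m+1),
        Polynomial.aeval σ (Polynomial.C (DK (P.coeff i) - ((m : K) - (i : K)) * μK * P.coeff i)
            * Polynomial.X ^ i)
          = (algebraMap K L (DK (P.coeff i)) * σ ^ i
              + (i : L) * μL * (algebraMap K L (P.coeff i) * σ ^ i))
            - (m : L) * μL * (algebraMap K L (P.coeff i) * σ ^ i) := by
      intro i _
      simp only [map_mul, Polynomial.aeval_C, map_pow, Polynomial.aeval_X, map_sub,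
        map_natCast, hμL]
      ring
    rw [Finset.sum_congr rfl hterm, Finset.sum_sub_distrib, hderiv, ← Finset.mul_sum,
      hPeval', mul_zero, sub_zero]
  have hQ0 : Q = 0 := by
    by_contra hQne
    have hle := minpoly.degree_le_of_ne_zero K σ hQne haevalQ
    have hlt : Q.degree < P.degree := by
      rw [Polynomial.degree_eq_natDegree (minpoly.ne_zero hint), ← hm]
      rw [Polynomial.degree_lt_iff_coeff_zero]
      intro j hj
      rw [hcoeffQ j]
      rcases eq_or_lt_of_le hj with heq | hgt
      · have hc : P.coeff j = 1 := by
          rw [heq.symm]; exact (minpoly.monic hint).coeff_natDegree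
        rw [if_pos heq.ge, hc, heq.symm]
        simp
      · rw [if_neg (not_le.mpr hgt)]
    exact absurd (lt_of_le_of_lt hle hlt) (lt_irrefl _)
  have hc := hcoeffQ (m - k)
  rw [hQ0, Polynomial.coeff_zero, if_pos (Nat.sub_le m k)] at hc
  have hcast : ((m : K) - ((m - k : ℕ) : K)) = (k : K) := by
    rw [Nat.cast_sub hk2]; ring
  rw [hcast] at hc
  exact sub_eq_zero.mp hc.symm
end
end

section
/- Let φ ∈ ℂ[x_1,…,x_n] be an irreducible polynomial with φ(0) = 0. Then, viewed as an element of the formal power series ring ℂ[[x_1,…,x_n]], φ is not divisible by the square of any non-invertible power series; equivalently, every irreducible factor of φ in ℂ[[x_1,…,x_n]] occurs with multiplicity one. -/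
open MvPolynomial Finset

noncomputable section

namespace PDAux

variable {σ : Type*} {R : Type*} [CommRing R]

/-- Partial derivative on multivariate power series. -/
noncomputable def pds (i : σ) (f : MvPowerSeries σ R) : MvPowerSeries σ R :=
  fun e => ((e i + 1 : ℕ) : R) * f (e + Finsupp.single i 1)

theorem coeff_pds (i : σ) (f : MvPowerSeries σ R) (e : σ →₀ ℕ) :
    MvPowerSeries.coeff e (pds i f) =
      ((e i + 1 : ℕ) : R) * MvPowerSeries.coeff (e + Finsupp.single i 1) f := rfl

theorem pds_add (i : σ) (f g : MvPowerSeries σ R) :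
    pds i (f + g) = pds i f + pds i g := by
  ext e
  simp only [coeff_pds, map_add, mul_add]

theorem sum_shift [DecidableEq σ] (i : σ) (F : (σ →₀ ℕ) → (σ →₀ ℕ) → R) (e : σ →₀ ℕ) :
    ∑ p ∈ antidiagonal (e + Finsupp.single i 1), (Nat.cast ((p.1 : σ →₀ ℕ) i) : R) * F p.1 p.2
      = ∑ q ∈ antidiagonal e,
          (Nat.cast ((q.1 : σ →₀ ℕ) i + 1) : R) * F (q.1 + Finsupp.single i 1) q.2 := by
  classical
  set δ := Finsupp.single i 1 with hδ
  rw [← Finset.sum_filter_of_ne (p := fun p : (σ →₀ ℕ) × (σ →₀ ℕ) => (p.1 : σ →₀ ℕ) i ≠ 0)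
    (by
      intro x _ hne h0
      apply hne
      rw [h0]
      simp)]
  refine Finset.sum_nbij' (fun p => (p.1 - δ, p.2)) (fun q => (q.1 + δ, q.2)) ?_ ?_ ?_ ?_ ?_
  · rintro ⟨u, v⟩ hp
    simp only [Finset.mem_filter, Finset.HasAntidiagonal.mem_antidiagonal] at hp
    obtain ⟨hsum, hne⟩ := hp
    have hle : δ ≤ u := by
      rw [hδ, Finsupp.single_le_iff]
      omega
    simp only [Finset.HasAntidiagonal.mem_antidiagonal]
    have : u - δ + v + δ = e + δ := by
      rw [add_right_comm, tsub_add_cancel_of_le hle, hsum]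
    exact add_right_cancel this
  · rintro ⟨u, v⟩ hq
    simp only [Finset.HasAntidiagonal.mem_antidiagonal] at hq
    simp only [Finset.mem_filter, Finset.HasAntidiagonal.mem_antidiagonal]
    constructor
    · rw [add_right_comm, hq]
    · simp [hδ, Finsupp.add_apply]
  · rintro ⟨u, v⟩ hp
    simp only [Finset.mem_filter, Finset.HasAntidiagonal.mem_antidiagonal] at hp
    have hle : δ ≤ u := by
      rw [hδ, Finsupp.single_le_iff]
      omega
    simp [tsub_add_cancel_of_le hle]
  · rintro ⟨u, v⟩ _
    simp
  · rintro ⟨u, v⟩ hp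
    simp only [Finset.mem_filter, Finset.HasAntidiagonal.mem_antidiagonal] at hp
    have hle : δ ≤ u := by
      rw [hδ, Finsupp.single_le_iff]
      omega
    simp only [tsub_add_cancel_of_le hle]
    congr 2
    have h1 : u i ≠ 0 := hp.2
    have : (u - δ) i + 1 = u i := by
      rw [Finsupp.tsub_apply, hδ, Finsupp.single_eq_same]
      omega
    rw [this]

theorem pds_mul (i : σ) (f g : MvPowerSeries σ R) :
    pds i (f * g) = pds i f * g + f * pds i g := by
  classical
  ext e
  set δ := Finsupp.single i 1 with hδ
  rw [map_add, coeff_pds, MvPowerSeries.coeff_mul, MvPowerSeries.coeff_mul,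
    MvPowerSeries.coeff_mul, Finset.mul_sum]
  have step1 : ∀ p ∈ antidiagonal (e + δ),
      ((e i + 1 : ℕ) : R) * (MvPowerSeries.coeff p.1 f * MvPowerSeries.coeff p.2 g)
        = (Nat.cast ((p.1 : σ →₀ ℕ) i) : R) *
            (MvPowerSeries.coeff p.1 f * MvPowerSeries.coeff p.2 g)
          + (Nat.cast ((p.2 : σ →₀ ℕ) i) : R) *
            (MvPowerSeries.coeff p.1 f * MvPowerSeries.coeff p.2 g) := by
    rintro ⟨u, v⟩ hp
    simp only [Finset.HasAntidiagonal.mem_antidiagonal] at hp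
    have : u i + v i = e i + 1 := by
      have := congrArg (fun w : σ →₀ ℕ => w i) hp
      simpa [hδ, Finsupp.add_apply] using this
    rw [← add_mul]
    congr 1
    rw [← Nat.cast_add, this]
  rw [Finset.sum_congr rfl step1, Finset.sum_add_distrib]
  congr 1
  · rw [sum_shift i (fun a b => MvPowerSeries.coeff a f * MvPowerSeries.coeff b g) e]
    apply Finset.sum_congr rfl
    rintro ⟨u, v⟩ _
    simp only [coeff_pds]
    ring
  · have swap1 : ∑ p ∈ antidiagonal (e + δ),
        (Nat.cast ((p.2 : σ →₀ ℕ) i) : R) *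
          (MvPowerSeries.coeff p.1 f * MvPowerSeries.coeff p.2 g)
        = ∑ p ∈ antidiagonal (e + δ),
        (Nat.cast ((p.1 : σ →₀ ℕ) i) : R) *
          (MvPowerSeries.coeff p.1 g * MvPowerSeries.coeff p.2 f) := by
      apply Finset.sum_equiv (Equiv.prodComm (σ →₀ ℕ) (σ →₀ ℕ))
      · rintro ⟨u, v⟩
        simp only [Finset.HasAntidiagonal.mem_antidiagonal, Equiv.prodComm_apply, Prod.swap]
        constructor <;> intro h <;> rw [← h, add_comm]
      · rintro ⟨u, v⟩ _
        simp only [Equiv.prodComm_apply, Prod.swap]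
        ring
    rw [swap1, sum_shift i (fun a b => MvPowerSeries.coeff a g * MvPowerSeries.coeff b f) e]
    apply Finset.sum_equiv (Equiv.prodComm (σ →₀ ℕ) (σ →₀ ℕ))
    · rintro ⟨u, v⟩
      simp only [Finset.HasAntidiagonal.mem_antidiagonal, Equiv.prodComm_apply, Prod.swap]
      constructor <;> intro h <;> rw [← h, add_comm]
    · rintro ⟨u, v⟩ _
      simp only [Equiv.prodComm_apply, Prod.swap, coeff_pds]
      ring


theorem pds_coe_C (i : σ) (a : R) :
    pds i ((C a : MvPolynomial σ R) : MvPowerSeries σ R) = 0 := by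
  classical
  ext e
  rw [coeff_pds, MvPowerSeries.coeff_zero]
  have : MvPowerSeries.coeff (e + Finsupp.single i 1) ((C a : MvPolynomial σ R) : MvPowerSeries σ R) = 0 := by
    rw [MvPolynomial.coeff_coe, MvPolynomial.coeff_C]
    have hne : e + Finsupp.single i 1 ≠ 0 := by
      intro h
      have := congrArg (fun w : σ →₀ ℕ => w i) h
      simp [Finsupp.add_apply, Finsupp.single_eq_same] at this
    simp [Ne.symm hne]
  rw [this, mul_zero]

theorem pds_coe_X (i j : σ) :
    pds i ((X j : MvPolynomial σ R) : MvPowerSeries σ R)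
      = ((pderiv i (X j) : MvPolynomial σ R) : MvPowerSeries σ R) := by
  classical
  by_cases h : j = i
  · subst h
    rw [pderiv_X_self]
    ext e
    rw [coeff_pds, MvPolynomial.coe_X, MvPowerSeries.coeff_X]
    by_cases he : e = 0
    · subst he
      simp [MvPolynomial.coe_one]
    · have : ¬(e + Finsupp.single j 1 = Finsupp.single j 1) := by
        intro h
        exact he (by simpa using add_right_cancel (h.trans (zero_add (Finsupp.single j 1)).symm))
      rw [if_neg this, mul_zero, MvPolynomial.coe_one]
      have : ¬ (e = 0) := he
      rw [MvPowerSeries.coeff_one, if_neg he]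
  · rw [pderiv_X_of_ne h, MvPolynomial.coe_zero]
    ext e
    rw [coeff_pds, MvPowerSeries.coeff_zero, MvPolynomial.coe_X, MvPowerSeries.coeff_X]
    have : ¬(e + Finsupp.single i 1 = Finsupp.single j 1) := by
      intro hh
      have h2 : e i + 1 = (Finsupp.single j 1 : σ →₀ ℕ) i := by
        rw [← hh]; simp [Finsupp.add_apply, Finsupp.single_eq_same]
      rw [Finsupp.single_apply, if_neg h] at h2
      omega
    rw [if_neg this, mul_zero]

theorem pds_coe (i : σ) (q : MvPolynomial σ R) :
    pds i ((q : MvPolynomial σ R) : MvPowerSeries σ R)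
      = ((pderiv i q : MvPolynomial σ R) : MvPowerSeries σ R) := by
  induction q using MvPolynomial.induction_on with
  | C a => rw [pds_coe_C, pderiv_C, MvPolynomial.coe_zero]
  | add p q hp hq =>
      rw [MvPolynomial.coe_add, pds_add, hp, hq, map_add, MvPolynomial.coe_add]
  | mul_X p j hp =>
      rw [MvPolynomial.coe_mul, pds_mul, hp, pderiv_mul, MvPolynomial.coe_add,
        MvPolynomial.coe_mul, MvPolynomial.coe_mul, pds_coe_X]

theorem derivative_finSuccEquiv {m : ℕ} (p : MvPolynomial (Fin (m + 1)) ℂ) :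
    Polynomial.derivative (finSuccEquiv ℂ m p) = finSuccEquiv ℂ m (pderiv 0 p) := by
  induction p using MvPolynomial.induction_on with
  | C a =>
      rw [pderiv_C, map_zero]
      have : (C a : MvPolynomial (Fin (m + 1)) ℂ) = algebraMap ℂ _ a := rfl
      rw [this, AlgEquiv.commutes]
      have : algebraMap ℂ (Polynomial (MvPolynomial (Fin m) ℂ)) a
          = Polynomial.C (C a) := rfl
      rw [this, Polynomial.derivative_C]
  | add p q hp hq => simp [hp, hq]
  | mul_X p j hp =>
      rw [pderiv_mul, map_add, map_mul (MvPolynomial.finSuccEquiv ℂ m),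
        map_mul (MvPolynomial.finSuccEquiv ℂ m), map_mul (MvPolynomial.finSuccEquiv ℂ m),
        Polynomial.derivative_mul, hp]
      rw [add_right_inj]
      rcases Fin.eq_zero_or_eq_succ j with hj | ⟨k, hj⟩
      · subst hj
        rw [finSuccEquiv_X_zero, pderiv_X_self, map_one, mul_one, Polynomial.derivative_X,
          mul_one]
      · subst hj
        rw [finSuccEquiv_X_succ, pderiv_X_of_ne (Fin.succ_ne_zero k), map_zero, mul_zero,
          Polynomial.derivative_C, mul_zero]

theorem finSuccEquiv_rename_succ {m : ℕ} (r : MvPolynomial (Fin m) ℂ) :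
    finSuccEquiv ℂ m (rename Fin.succ r) = Polynomial.C r := by
  induction r using MvPolynomial.induction_on with
  | C a =>
      rw [rename_C]
      have : (C a : MvPolynomial (Fin (m + 1)) ℂ) = algebraMap ℂ _ a := rfl
      rw [this, AlgEquiv.commutes]
      rfl
  | add p q hp hq => rw [map_add, map_add, hp, hq, Polynomial.C_add]
  | mul_X p j hp =>
      rw [map_mul, map_mul, rename_X, finSuccEquiv_X_succ, hp, Polynomial.C_mul]

/-- Key step: for each variable `i`, there is a nonzero polynomial `D` not involving `x i`
which is divisible by `ψ` in the power series ring. -/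
theorem key_step {m : ℕ} (φ : MvPolynomial (Fin (m + 1)) ℂ) (hirr : Irreducible φ)
    (ψ : MvPowerSeries (Fin (m + 1)) ℂ) (hψ : ψ * ψ ∣ (φ : MvPowerSeries (Fin (m + 1)) ℂ))
    (i : Fin (m + 1)) :
    ∃ D : MvPolynomial (Fin (m + 1)) ℂ, D ≠ 0 ∧ (∀ e ∈ D.support, e i = 0) ∧
      ψ ∣ (D : MvPowerSeries (Fin (m + 1)) ℂ) := by
  classical
  set τ : Fin (m + 1) ≃ Fin (m + 1) := Equiv.swap i 0 with hτ
  set F : MvPolynomial (Fin (m + 1)) ℂ ≃ₐ[ℂ] Polynomial (MvPolynomial (Fin m) ℂ) :=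
    (renameEquiv ℂ τ).trans (finSuccEquiv ℂ m) with hF
  have hinj : Function.Injective ((τ : Fin (m+1) → Fin (m+1)) ∘ Fin.succ) :=
    τ.injective.comp (Fin.succ_injective _)
  -- the pullback of constants
  have hpull : ∀ d : MvPolynomial (Fin m) ℂ,
      F.symm (Polynomial.C d) = rename ((τ : Fin (m+1) → Fin (m+1)) ∘ Fin.succ) d := by
    intro d
    apply F.injective
    rw [AlgEquiv.apply_symm_apply]
    have h1 : rename ((τ : Fin (m+1) → Fin (m+1)) ∘ Fin.succ) d
        = rename τ (rename Fin.succ d) := by rw [rename_rename]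
    rw [h1, hF]
    simp only [AlgEquiv.trans_apply, renameEquiv_apply]
    have h2 : rename (τ : Fin (m+1) → Fin (m+1)) (rename τ (rename Fin.succ d))
        = rename Fin.succ d := by
      rw [rename_rename]
      have h3 : (τ : Fin (m+1) → Fin (m+1)) ∘ τ = id := by
        funext x
        simp [hτ, Equiv.swap_apply_self]
      rw [h3, rename_id_apply]
    rw [h2, finSuccEquiv_rename_succ]
  -- the support property
  have hsupp : ∀ r : MvPolynomial (Fin m) ℂ,
      ∀ e ∈ (rename ((τ : Fin (m+1) → Fin (m+1)) ∘ Fin.succ) r).support, e i = 0 := by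
    intro r e he
    rw [support_rename_of_injective hinj] at he
    obtain ⟨e', _, rfl⟩ := Finset.mem_image.mp he
    apply Finsupp.mapDomain_notin_range
    rintro ⟨j, hj⟩
    have h4 : Fin.succ j = τ i := by
      have h5 := congrArg τ hj
      simp only [Function.comp_apply] at h5
      rwa [Equiv.swap_apply_self] at h5
    rw [hτ, Equiv.swap_apply_left] at h4
    exact Fin.succ_ne_zero j h4
  set f := F φ with hf
  have hfirr : Irreducible f := (MulEquiv.irreducible_iff F).mpr hirr
  have hφ0 : φ ≠ 0 := hirr.ne_zero
  have hψφ : ψ ∣ (φ : MvPowerSeries (Fin (m + 1)) ℂ) := (dvd_mul_right ψ ψ).trans hψ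
  by_cases hdeg : f.natDegree = 0
  · obtain ⟨r, hr⟩ := Polynomial.natDegree_eq_zero.mp hdeg
    have hφr : φ = rename ((τ : Fin (m+1) → Fin (m+1)) ∘ Fin.succ) r := by
      have h6 := hpull r
      rw [hr] at h6
      rw [← h6, hf, AlgEquiv.symm_apply_apply]
    refine ⟨φ, hφ0, ?_, hψφ⟩
    intro e he
    rw [hφr] at he
    exact hsupp r e he
  -- main case : `f` has positive degree
  letI : NormalizationMonoid (MvPolynomial (Fin m) ℂ) :=
    UniqueFactorizationMonoid.normalizationMonoid.toNormalizationMonoid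
  letI : NormalizedGCDMonoid (MvPolynomial (Fin m) ℂ) :=
    UniqueFactorizationMonoid.toNormalizedGCDMonoid (MvPolynomial (Fin m) ℂ)
  have hprim : f.IsPrimitive := by
    intro r hrd
    obtain ⟨g, hg⟩ := hrd
    rcases hfirr.isUnit_or_isUnit hg with h | h
    · exact Polynomial.isUnit_C.mp h
    · exfalso
      obtain ⟨u, hu, hcu⟩ := Polynomial.isUnit_iff.mp h
      apply hdeg
      rw [hg, ← hcu, ← Polynomial.C_mul, Polynomial.natDegree_C]
  have hKirr : Irreducible (f.map (algebraMap (MvPolynomial (Fin m) ℂ)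
      (FractionRing (MvPolynomial (Fin m) ℂ)))) :=
    (hprim.irreducible_iff_irreducible_map_fraction_map).mp hfirr
  have hsep : (f.map (algebraMap (MvPolynomial (Fin m) ℂ)
      (FractionRing (MvPolynomial (Fin m) ℂ)))).Separable := hKirr.separable
  obtain ⟨a, b, hab⟩ := hsep
  obtain ⟨ca, hca⟩ := IsLocalization.integerNormalization_map_to_map
    (nonZeroDivisors (MvPolynomial (Fin m) ℂ)) a
  obtain ⟨cb, hcb⟩ := IsLocalization.integerNormalization_map_to_map
    (nonZeroDivisors (MvPolynomial (Fin m) ℂ)) b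
  set A := IsLocalization.integerNormalization (nonZeroDivisors (MvPolynomial (Fin m) ℂ)) a
    with hA
  set B := IsLocalization.integerNormalization (nonZeroDivisors (MvPolynomial (Fin m) ℂ)) b
    with hB
  set d : MvPolynomial (Fin m) ℂ := (ca : MvPolynomial (Fin m) ℂ) * (cb : MvPolynomial (Fin m) ℂ)
    with hd
  have hd0 : d ≠ 0 := mul_ne_zero (nonZeroDivisors.ne_zero ca.2) (nonZeroDivisors.ne_zero cb.2)
  have hsmul : ∀ (r : MvPolynomial (Fin m) ℂ)
      (p : Polynomial (FractionRing (MvPolynomial (Fin m) ℂ))),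
      r • p = Polynomial.C (algebraMap (MvPolynomial (Fin m) ℂ)
        (FractionRing (MvPolynomial (Fin m) ℂ)) r) * p := by
    intro r p
    rw [Algebra.smul_def, Polynomial.algebraMap_apply]
  have hid : Polynomial.C (cb : MvPolynomial (Fin m) ℂ) * A * f
      + Polynomial.C (ca : MvPolynomial (Fin m) ℂ) * B * Polynomial.derivative f
      = Polynomial.C d := by
    apply Polynomial.map_injective (algebraMap (MvPolynomial (Fin m) ℂ)
      (FractionRing (MvPolynomial (Fin m) ℂ)))
      (IsFractionRing.injective (MvPolynomial (Fin m) ℂ)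
        (FractionRing (MvPolynomial (Fin m) ℂ)))
    rw [Polynomial.map_add, Polynomial.map_mul, Polynomial.map_mul, Polynomial.map_mul,
      Polynomial.map_mul, Polynomial.map_C, Polynomial.map_C, Polynomial.map_C, hca, hcb,
      ← Polynomial.derivative_map, hsmul, hsmul, hd, map_mul]
    rw [Polynomial.C_mul]
    have h11 : Polynomial.C ((algebraMap (MvPolynomial (Fin m) ℂ)
          (FractionRing (MvPolynomial (Fin m) ℂ))) (ca : MvPolynomial (Fin m) ℂ))
        * Polynomial.C ((algebraMap (MvPolynomial (Fin m) ℂ)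
          (FractionRing (MvPolynomial (Fin m) ℂ))) (cb : MvPolynomial (Fin m) ℂ))
        * (a * Polynomial.map (algebraMap (MvPolynomial (Fin m) ℂ)
            (FractionRing (MvPolynomial (Fin m) ℂ))) f
          + b * Polynomial.derivative (Polynomial.map (algebraMap (MvPolynomial (Fin m) ℂ)
            (FractionRing (MvPolynomial (Fin m) ℂ))) f))
        = Polynomial.C ((algebraMap (MvPolynomial (Fin m) ℂ)
          (FractionRing (MvPolynomial (Fin m) ℂ))) (ca : MvPolynomial (Fin m) ℂ))
        * Polynomial.C ((algebraMap (MvPolynomial (Fin m) ℂ)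
          (FractionRing (MvPolynomial (Fin m) ℂ))) (cb : MvPolynomial (Fin m) ℂ)) := by
      rw [hab, mul_one]
    rw [← h11]
    ring
  set D : MvPolynomial (Fin (m+1)) ℂ := rename ((τ : Fin (m+1) → Fin (m+1)) ∘ Fin.succ) d
    with hD
  have hFd : F (pderiv i φ) = Polynomial.derivative f := by
    rw [hf, hF]
    simp only [AlgEquiv.trans_apply, renameEquiv_apply]
    have h7 : rename (τ : Fin (m+1) → Fin (m+1)) (pderiv i φ)
        = pderiv (τ i) (rename (τ : Fin (m+1) → Fin (m+1)) φ) :=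
      (pderiv_rename τ.injective i φ).symm
    have h8 : τ i = 0 := Equiv.swap_apply_left i 0
    rw [h7, h8, ← derivative_finSuccEquiv]
  have hDeq : F.symm (Polynomial.C (cb : MvPolynomial (Fin m) ℂ) * A) * φ
      + F.symm (Polynomial.C (ca : MvPolynomial (Fin m) ℂ) * B) * pderiv i φ = D := by
    apply F.injective
    rw [map_add, map_mul F, map_mul F, AlgEquiv.apply_symm_apply, AlgEquiv.apply_symm_apply,
      hFd, ← hf, hid]
    have h9 := congrArg F (hpull d)
    rw [AlgEquiv.apply_symm_apply] at h9
    rw [hD, ← h9]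
  have hDne : D ≠ 0 := by
    intro h
    have h10 : rename ((τ : Fin (m+1) → Fin (m+1)) ∘ Fin.succ) d
        = rename ((τ : Fin (m+1) → Fin (m+1)) ∘ Fin.succ) 0 := by
      rw [← hD, h, map_zero]
    exact hd0 (rename_injective _ hinj h10)
  refine ⟨D, hDne, hsupp d, ?_⟩
  rw [← hDeq, MvPolynomial.coe_add, MvPolynomial.coe_mul, MvPolynomial.coe_mul]
  apply dvd_add
  · exact Dvd.dvd.mul_left hψφ _
  · have hdvd2 : ψ ∣ ((pderiv i φ : MvPolynomial (Fin (m+1)) ℂ)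
        : MvPowerSeries (Fin (m+1)) ℂ) := by
      obtain ⟨g, hg⟩ := hψ
      rw [← pds_coe, hg, show ψ * ψ * g = ψ * (ψ * g) by ring, pds_mul]
      apply dvd_add
      · exact ⟨pds i ψ * g, by ring⟩
      · exact ⟨pds i (ψ * g), rfl⟩
    exact hdvd2.mul_left _

end PDAux

open PDAux in
/-- An irreducible polynomial `φ ∈ ℂ[x_1,…,x_n]` with `φ(0) = 0` is squarefree as an
element of the formal power series ring `ℂ[[x_1,…,x_n]]`: every irreducible factor of
`φ` in `ℂ[[x_1,…,x_n]]` occurs with multiplicity one. -/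
theorem stmt2 (n : ℕ) (φ : MvPolynomial (Fin n) ℂ)
    (hirr : Irreducible φ)
    (h0 : eval (0 : Fin n → ℂ) φ = 0) :
    Squarefree (↑φ : MvPowerSeries (Fin n) ℂ) := by
  intro ψ hψ
  cases n with
  | zero =>
      exfalso
      obtain ⟨a, rfl⟩ := MvPolynomial.C_surjective (Fin 0) φ
      rw [eval_C] at h0
      rw [h0, map_zero] at hirr
      exact not_irreducible_zero hirr
  | succ m =>
      have hφ0 : φ ≠ 0 := hirr.ne_zero
      have hψ0 : ψ ≠ 0 := by
        rintro rfl
        rw [zero_mul, zero_dvd_iff, MvPolynomial.coe_eq_zero_iff] at hψ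
        exact hφ0 hψ
      obtain ⟨dψ, hdψ⟩ := MvPowerSeries.exists_finsupp_eq_lexOrder_of_ne_zero hψ0
      suffices hz : dψ = 0 by
        have hc : MvPowerSeries.coeff (0 : Fin (m+1) →₀ ℕ) ψ ≠ 0 := by
          have h1 := MvPowerSeries.coeff_ne_zero_of_lexOrder hdψ.symm
          rwa [hz] at h1
        rw [MvPowerSeries.isUnit_iff_constantCoeff]
        have h2 : MvPowerSeries.constantCoeff ψ
            = MvPowerSeries.coeff (0 : Fin (m+1) →₀ ℕ) ψ := rfl
        rw [h2]
        exact isUnit_iff_ne_zero.mpr hc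
      ext i
      obtain ⟨D, hD0, hDsupp, hdvd⟩ := key_step φ hirr ψ hψ i
      obtain ⟨c, hc⟩ := hdvd
      have hDcoe0 : (D : MvPowerSeries (Fin (m+1)) ℂ) ≠ 0 := by
        rw [Ne, MvPolynomial.coe_eq_zero_iff]
        exact hD0
      have hc0 : c ≠ 0 := by
        rintro rfl
        rw [mul_zero] at hc
        exact hDcoe0 hc
      obtain ⟨dc, hdc⟩ := MvPowerSeries.exists_finsupp_eq_lexOrder_of_ne_zero hc0
      obtain ⟨dD, hdD⟩ := MvPowerSeries.exists_finsupp_eq_lexOrder_of_ne_zero hDcoe0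
      have hmul := MvPowerSeries.lexOrder_mul ψ c
      rw [← hc, hdD, hdψ, hdc] at hmul
      have hsum : dD = dψ + dc := by
        have h3 : toLex dD = toLex dψ + toLex dc :=
          WithTop.coe_injective (by rw [WithTop.coe_add]; exact hmul)
        have h4 : toLex dD = toLex (dψ + dc) := by rw [h3, ← toLex_add]
        exact toLex.injective h4
      have hdDi : dD i = 0 := by
        apply hDsupp
        rw [MvPolynomial.mem_support_iff]
        have h4 := MvPowerSeries.coeff_ne_zero_of_lexOrder hdD.symm
        rwa [MvPolynomial.coeff_coe] at h4
      have h5 : dψ i + dc i = 0 := by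
        have := congrArg (fun w : Fin (m+1) →₀ ℕ => w i) hsum
        simp only [Finsupp.add_apply] at this
        omega
      simp only [Finsupp.coe_zero, Pi.zero_apply]
      omega
end
end

section
/- Let ψ_1, ψ_2 ∈ ℂ[x_1,…,x_n] be relatively prime polynomials with ψ_1(0) = ψ_2(0) = 0. Then ψ_1 and ψ_2 have no common non-invertible divisor in the formal power series ring ℂ[[x_1,…,x_n]]; in particular their prime factorizations in ℂ[[x_1,…,x_n]] share no common irreducible factor. -/
open MvPolynomial

set_option maxHeartbeats 1000000

noncomputable section

namespace Stmt3Aux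

open Finsupp

variable {n : ℕ}

/-- The ideal of `ℂ[x_1,…,x_n]` generated by the variables. -/
def Im (n : ℕ) : Ideal (MvPolynomial (Fin n) ℂ) := Ideal.span (Set.range X)

lemma X_mem_Im (i : Fin n) : (X i : MvPolynomial (Fin n) ℂ) ∈ Im n :=
  Ideal.subset_span ⟨i, rfl⟩

lemma degree_add' (a b : Fin n →₀ ℕ) : (a + b).degree = a.degree + b.degree := by
  simp [degree_eq_weight_one, map_add]

lemma degree_single_one (i : Fin n) : (Finsupp.single i 1).degree = 1 := by
  exact Finsupp.degree_single i 1

lemma coeff_eq_zero_of_mem_pow {k : ℕ} {p : MvPolynomial (Fin n) ℂ}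
    (hp : p ∈ Im n ^ k) {m : Fin n →₀ ℕ} (hm : m.degree < k) : coeff m p = 0 := by
  induction k generalizing p m with
  | zero => omega
  | succ k ih =>
    rw [pow_succ] at hp
    have main : ∀ m : Fin n →₀ ℕ, m.degree < k + 1 → coeff m p = 0 := by
      refine Submodule.mul_induction_on hp ?_ ?_
      · intro a ha b hb m hm
        rw [MvPolynomial.coeff_mul]
        refine Finset.sum_eq_zero ?_
        rintro ⟨u, v⟩ huv
        have huv' : u + v = m := Finset.HasAntidiagonal.mem_antidiagonal.mp huv
        by_cases hv : coeff v b = 0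
        · simp [hv]
        · have hbmem : b ∈ Ideal.span (X '' (Set.univ : Set (Fin n)) :
              Set (MvPolynomial (Fin n) ℂ)) := by
            rwa [Set.image_univ]
          obtain ⟨i, -, hi⟩ := mem_ideal_span_X_image.mp hbmem v
            (MvPolynomial.mem_support_iff.mpr hv)
          have hv1 : 1 ≤ v.degree := le_trans (Nat.one_le_iff_ne_zero.mpr hi) (le_degree i v)
          have hdeg : u.degree + v.degree = m.degree := by rw [← huv', degree_add']
          have hu : u.degree < k := by omega
          have : coeff u a = 0 := ih ha hu
          simp [this]
      · intro x y hx hy m hm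
        simp [hx m hm, hy m hm]
    exact main m hm

lemma monomial_mem_pow : ∀ (k : ℕ) (m : Fin n →₀ ℕ), k ≤ m.degree → ∀ c : ℂ,
    (monomial m c : MvPolynomial (Fin n) ℂ) ∈ Im n ^ k := by
  intro k
  induction k with
  | zero => simp
  | succ k ih =>
    intro m hm c
    have hm0 : m ≠ 0 := by
      rintro rfl
      simp [map_zero] at hm
    obtain ⟨i, hi⟩ : ∃ i, m i ≠ 0 := by
      by_contra h
      push_neg at h
      exact hm0 (Finsupp.ext fun i => h i)
    set m' := m - Finsupp.single i 1 with hm'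
    have hsum : Finsupp.single i 1 + m' = m := by
      ext j
      rcases eq_or_ne i j with rfl | hij
      · have : 1 ≤ m i := Nat.one_le_iff_ne_zero.mpr hi
        simp [hm', Finsupp.single_apply]
        omega
      · simp [hm', Finsupp.single_apply, hij]
    have hdeg : k ≤ m'.degree := by
      have h1 := degree_add' (Finsupp.single i 1) m'
      rw [hsum, degree_single_one] at h1
      omega
    have hxm : (monomial m c : MvPolynomial (Fin n) ℂ) = X i * monomial m' c := by
      rw [X, monomial_mul, one_mul, hsum]
    rw [hxm, pow_succ']
    exact Ideal.mul_mem_mul (X_mem_Im i) (ih m' hdeg c)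

lemma mem_pow_of_coeff_eq_zero {k : ℕ} {p : MvPolynomial (Fin n) ℂ}
    (h : ∀ m : Fin n →₀ ℕ, m.degree < k → coeff m p = 0) : p ∈ Im n ^ k := by
  rw [p.as_sum]
  refine Submodule.sum_mem _ ?_
  intro m hm
  refine monomial_mem_pow k m ?_ _
  by_contra hlt
  push_neg at hlt
  exact (MvPolynomial.mem_support_iff.mp hm) (h m hlt)

lemma smul_top (k : ℕ) :
    (Im n ^ k • ⊤ : Submodule (MvPolynomial (Fin n) ℂ) (MvPolynomial (Fin n) ℂ)) = Im n ^ k := by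
  rw [Ideal.smul_eq_mul, Ideal.mul_top]

/-- Finset of monomial exponents of degree `< k`. -/
def DF (n k : ℕ) : Finset (Fin n →₀ ℕ) :=
  have h : {m : Fin n →₀ ℕ | m.degree < k}.Finite :=
    (Finsupp.finite_of_degree_le (σ := Fin n) k).subset
      (Set.setOf_subset_setOf.mpr fun _ hf => le_of_lt hf)
  h.toFinset

lemma mem_DF {k : ℕ} {m : Fin n →₀ ℕ} : m ∈ DF n k ↔ m.degree < k := by
  simp [DF, Set.Finite.mem_toFinset]

/-- Truncation of a power series by total degree. -/
def truncD (k : ℕ) (φ : MvPowerSeries (Fin n) ℂ) : MvPolynomial (Fin n) ℂ :=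
  ∑ m ∈ DF n k, monomial m (MvPowerSeries.coeff m φ)

lemma coeff_truncD (k : ℕ) (m : Fin n →₀ ℕ) (φ : MvPowerSeries (Fin n) ℂ) :
    coeff m (truncD k φ) = if m.degree < k then MvPowerSeries.coeff m φ else 0 := by
  classical
  simp [truncD, MvPolynomial.coeff_sum, MvPolynomial.coeff_monomial, mem_DF]

lemma truncD_add (k : ℕ) (φ ψ : MvPowerSeries (Fin n) ℂ) :
    truncD k (φ + ψ) = truncD k φ + truncD k ψ := by
  ext m
  simp only [coeff_truncD, MvPolynomial.coeff_add, map_add]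
  split_ifs <;> simp

lemma algebraMap_eq_coe (p : MvPolynomial (Fin n) ℂ) :
    algebraMap (MvPolynomial (Fin n) ℂ) (MvPowerSeries (Fin n) ℂ) p = ↑p := by
  rw [MvPowerSeries.algebraMap_apply', Algebra.algebraMap_self, MvPowerSeries.map_id]
  rfl

lemma transitionMap_mk' {j k : ℕ} (hjk : j ≤ k) (p : MvPolynomial (Fin n) ℂ) :
    AdicCompletion.transitionMap (Im n) (MvPolynomial (Fin n) ℂ) hjk (Submodule.Quotient.mk p) =
      Submodule.Quotient.mk p := rfl

def toAdicFun (φ : MvPowerSeries (Fin n) ℂ) :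
    AdicCompletion (Im n) (MvPolynomial (Fin n) ℂ) :=
  ⟨fun k => Submodule.Quotient.mk (truncD k φ), by
    intro j k hjk
    rw [transitionMap_mk', Submodule.Quotient.eq, smul_top]
    refine mem_pow_of_coeff_eq_zero fun m hm => ?_
    simp [coeff_truncD, hm, hm.trans_le hjk]⟩

lemma toAdicFun_val (φ : MvPowerSeries (Fin n) ℂ) (k : ℕ) :
    (toAdicFun φ).val k = Submodule.Quotient.mk (truncD k φ) := rfl

/-- The natural `ℂ[x]`-linear map from power series to the adic completion. -/
def toAdic : MvPowerSeries (Fin n) ℂ →ₗ[MvPolynomial (Fin n) ℂ]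
    AdicCompletion (Im n) (MvPolynomial (Fin n) ℂ) where
  toFun := toAdicFun
  map_add' φ ψ := by
    refine AdicCompletion.ext fun k => ?_
    rw [AdicCompletion.val_add_apply, toAdicFun_val, toAdicFun_val, toAdicFun_val,
      ← Submodule.Quotient.mk_add, truncD_add]
  map_smul' r φ := by
    refine AdicCompletion.ext fun k => ?_
    rw [AdicCompletion.val_smul_apply, RingHom.id_apply, toAdicFun_val, toAdicFun_val,
      ← Submodule.Quotient.mk_smul, Submodule.Quotient.eq, smul_top]
    refine mem_pow_of_coeff_eq_zero fun m hm => ?_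
    have hsmul : r • φ = (↑r : MvPowerSeries (Fin n) ℂ) * φ := by
      rw [Algebra.smul_def, algebraMap_eq_coe]
    rw [MvPolynomial.coeff_sub, coeff_truncD, if_pos hm, hsmul, smul_eq_mul,
      MvPowerSeries.coeff_mul, MvPolynomial.coeff_mul]
    rw [sub_eq_zero]
    refine Finset.sum_congr rfl ?_
    rintro ⟨u, v⟩ huv
    have huv' : u + v = m := Finset.HasAntidiagonal.mem_antidiagonal.mp huv
    have hv : v.degree < k := by
      have := degree_add' u v
      rw [huv'] at this
      omega
    rw [MvPolynomial.coeff_coe, coeff_truncD, if_pos hv]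

lemma toAdic_val (φ : MvPowerSeries (Fin n) ℂ) (k : ℕ) :
    (toAdic (n := n) φ).val k = Submodule.Quotient.mk (truncD k φ) := toAdicFun_val φ k

lemma toAdic_injective : Function.Injective (toAdic (n := n)) := by
  intro φ ψ h
  refine MvPowerSeries.ext fun m => ?_
  set k := m.degree + 1 with hk
  have h1 : (toAdic (n := n) φ).val k = (toAdic (n := n) ψ).val k := by rw [h]
  rw [toAdic_val, toAdic_val, Submodule.Quotient.eq, smul_top] at h1
  have h2 := coeff_eq_zero_of_mem_pow h1 (m := m) (by omega)
  rw [MvPolynomial.coeff_sub, sub_eq_zero, coeff_truncD, coeff_truncD,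
    if_pos (by omega : m.degree < k), if_pos (by omega : m.degree < k)] at h2
  exact h2

lemma toAdic_surjective : Function.Surjective (toAdic (n := n)) := by
  intro x
  have hrep : ∀ k, ∃ p : MvPolynomial (Fin n) ℂ, Submodule.Quotient.mk p = x.val k :=
    fun k => Submodule.Quotient.mk_surjective _ (x.val k)
  choose rep hrep using hrep
  have key : ∀ (m : Fin n →₀ ℕ) (j k : ℕ), m.degree < j → j ≤ k →
      coeff m (rep j) = coeff m (rep k) := by
    intro m j k hmj hjk
    have h1 : Submodule.Quotient.mk (rep k) =
        (Submodule.Quotient.mk (rep j) :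
          MvPolynomial (Fin n) ℂ ⧸ (Im n ^ j • ⊤ :
            Submodule (MvPolynomial (Fin n) ℂ) (MvPolynomial (Fin n) ℂ))) := by
      have h2 := x.2 hjk
      rw [← hrep k, ← hrep j] at h2
      rw [transitionMap_mk'] at h2
      exact h2
    rw [Submodule.Quotient.eq, smul_top] at h1
    have h3 := coeff_eq_zero_of_mem_pow h1 hmj
    rw [MvPolynomial.coeff_sub, sub_eq_zero] at h3
    exact h3.symm
  refine ⟨(fun m => coeff m (rep (m.degree + 1)) : MvPowerSeries (Fin n) ℂ), ?_⟩
  refine AdicCompletion.ext fun k => ?_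
  refine (toAdic_val _ k).trans ?_
  rw [← hrep k, Submodule.Quotient.eq, smul_top]
  refine mem_pow_of_coeff_eq_zero fun m hm => ?_
  rw [MvPolynomial.coeff_sub, sub_eq_zero]
  refine (coeff_truncD k m _).trans ?_
  rw [if_pos hm]
  have hc : MvPowerSeries.coeff m
      (fun m => coeff m (rep (m.degree + 1)) : MvPowerSeries (Fin n) ℂ) =
      coeff m (rep (m.degree + 1)) := rfl
  rw [hc]
  calc coeff m (rep (m.degree + 1))
      = coeff m (rep (max (m.degree + 1) k)) :=
        key m (m.degree + 1) _ (by omega) (le_max_left _ _)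
    _ = coeff m (rep k) := (key m k _ hm (le_max_right _ _)).symm

/-- The power series ring is flat over the polynomial ring. -/
lemma flatS : Module.Flat (MvPolynomial (Fin n) ℂ) (MvPowerSeries (Fin n) ℂ) := by
  have : Module.Flat (MvPolynomial (Fin n) ℂ)
      (AdicCompletion (Im n) (MvPolynomial (Fin n) ℂ)) :=
    AdicCompletion.flat_of_isNoetherian (Im n)
  have hf : Module.Flat (MvPolynomial (Fin n) ℂ)
      (AdicCompletion (Im n) (MvPolynomial (Fin n) ℂ)) := this
  exact Module.Flat.of_linearEquiv
    (LinearEquiv.ofBijective (toAdic (n := n)) ⟨toAdic_injective, toAdic_surjective⟩)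

end Stmt3Aux

open Stmt3Aux in
/-- Relatively prime polynomials `ψ_1, ψ_2 ∈ ℂ[x_1,…,x_n]` with `ψ_1(0) = ψ_2(0) = 0`
remain relatively prime in the formal power series ring `ℂ[[x_1,…,x_n]]`: every common
divisor there is invertible, i.e. their prime factorizations share no irreducible factor. -/
theorem stmt3 (n : ℕ) (ψ₁ ψ₂ : MvPolynomial (Fin n) ℂ)
    (hrp : IsRelPrime ψ₁ ψ₂)
    (h1 : eval (0 : Fin n → ℂ) ψ₁ = 0)
    (h2 : eval (0 : Fin n → ℂ) ψ₂ = 0) :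
    IsRelPrime (↑ψ₁ : MvPowerSeries (Fin n) ℂ) (↑ψ₂ : MvPowerSeries (Fin n) ℂ) := by
  classical
  intro d hd1 hd2
  obtain ⟨a, ha⟩ := hd1
  obtain ⟨b, hb⟩ := hd2
  have hψ₁ : ψ₁ ≠ 0 := by
    rintro rfl
    have hu : IsUnit ψ₂ := hrp (dvd_zero ψ₂) dvd_rfl
    have := hu.map (eval (0 : Fin n → ℂ))
    rw [h2] at this
    exact not_isUnit_zero this
  have hψ₂ : ψ₂ ≠ 0 := by
    rintro rfl
    have hu : IsUnit ψ₁ := hrp.symm (dvd_zero ψ₁) dvd_rfl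
    have := hu.map (eval (0 : Fin n → ℂ))
    rw [h1] at this
    exact not_isUnit_zero this
  have hcoe1 : (ψ₁ : MvPowerSeries (Fin n) ℂ) ≠ 0 := by
    intro h
    apply hψ₁
    rw [← MvPolynomial.coe_inj (ψ := 0)]
    simpa using h
  have hd0 : d ≠ 0 := by
    rintro rfl
    rw [zero_mul] at ha
    exact hcoe1 ha
  have hrel : (ψ₂ : MvPowerSeries (Fin n) ℂ) * a - (ψ₁ : MvPowerSeries (Fin n) ℂ) * b = 0 := by
    have h' : d * ((ψ₂ : MvPowerSeries (Fin n) ℂ) * a) =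
        d * ((ψ₁ : MvPowerSeries (Fin n) ℂ) * b) := by
      calc d * ((ψ₂ : MvPowerSeries (Fin n) ℂ) * a)
          = (ψ₂ : MvPowerSeries (Fin n) ℂ) * (d * a) := by ring
        _ = (ψ₂ : MvPowerSeries (Fin n) ℂ) * (ψ₁ : MvPowerSeries (Fin n) ℂ) := by rw [← ha]
        _ = (ψ₁ : MvPowerSeries (Fin n) ℂ) * (d * b) := by rw [← hb]; ring
        _ = d * ((ψ₁ : MvPowerSeries (Fin n) ℂ) * b) := by ring
    have := mul_left_cancel₀ hd0 h'
    rw [this, sub_self]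
  have hflat : Module.Flat (MvPolynomial (Fin n) ℂ) (MvPowerSeries (Fin n) ℂ) := flatS
  have hsum : ∑ i, (![ψ₂, ψ₁] i) • (![a, -b] i) = (0 : MvPowerSeries (Fin n) ℂ) := by
    rw [Fin.sum_univ_two]
    simp only [Matrix.cons_val_zero, Matrix.cons_val_one, Matrix.head_cons]
    rw [Algebra.smul_def, Algebra.smul_def, algebraMap_eq_coe, algebraMap_eq_coe]
    linear_combination hrel
  obtain ⟨κ, aij, y, hx, hf⟩ := @Module.Flat.isTrivialRelation_of_sum_smul_eq_zero
    (MvPolynomial (Fin n) ℂ) (MvPowerSeries (Fin n) ℂ) _ _ _ hflat (Fin 2) _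
    ![ψ₂, ψ₁] ![a, -b] hsum
  have hdvd : ∀ j, ψ₁ ∣ aij 0 j := by
    intro j
    have h0 := hf j
    rw [Fin.sum_univ_two] at h0
    simp only [Matrix.cons_val_zero, Matrix.cons_val_one, Matrix.head_cons] at h0
    have hdd : ψ₁ ∣ aij 0 j * ψ₂ := ⟨-(aij 1 j), by linear_combination h0⟩
    exact hrp.dvd_of_dvd_mul_right hdd
  choose c hc using hdvd
  have hdvd2 : (ψ₁ : MvPowerSeries (Fin n) ℂ) ∣ a := by
    have hxa : a = ∑ j, aij 0 j • y j := by simpa using hx 0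
    rw [hxa]
    refine Finset.dvd_sum fun j _ => ?_
    rw [Algebra.smul_def, algebraMap_eq_coe, hc j]
    exact ⟨(c j : MvPowerSeries (Fin n) ℂ) * y j, by push_cast; ring⟩
  obtain ⟨e, he⟩ := hdvd2
  have hz : (ψ₁ : MvPowerSeries (Fin n) ℂ) * (1 - d * e) = 0 := by
    have h' : (ψ₁ : MvPowerSeries (Fin n) ℂ) =
        d * ((ψ₁ : MvPowerSeries (Fin n) ℂ) * e) := by rw [← he, ← ha]
    linear_combination h'
  have h1e : 1 - d * e = 0 := by
    rcases mul_eq_zero.mp hz with h | h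
    · exact absurd h hcoe1
    · exact h
  exact IsUnit.of_mul_eq_one (a := d) e (by linear_combination -h1e)
end
end

section
/- Let ψ ∈ ℂ[x_1,…,x_n] be an irreducible polynomial of degree r whose degree-r homogeneous part satisfies ψ^{(r)}(e_1) = 0, where e_1 = (1,0,…,0). Then the Poincaré transform ψ*_{e_1} is an irreducible polynomial in ℂ[x_2,…,x_{n+1}]. -/
set_option linter.unusedSectionVars false


open MvPolynomial

noncomputable section

/-- The Poincaré transform `ψ*_{e_1}` of a polynomial `ψ ∈ ℂ[x_1,…,x_n]` of degree `r`:
`ψ*_{e_1}(x_2,…,x_{n+1}) = Σ_{j=0}^r ψ^{(j)}(1,x_2,…,x_n)·x_{n+1}^{r-j}`.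
Here the variables `x_1,…,x_{ n+1}` are indexed by `Fin (n+1)` (the variable with index `0`,
corresponding to `x_1`, does not occur, so the result lies in `ℂ[x_2,…,x_{n+1}]`). -/
def poincareT (n r : ℕ) (ψ : MvPolynomial (Fin n) ℂ) : MvPolynomial (Fin (n + 1)) ℂ :=
  ∑ j ∈ Finset.range (r + 1),
    aeval (fun i : Fin n => if (i : ℕ) = 0 then 1 else X i.castSucc)
        (homogeneousComponent j ψ) *
      X (Fin.last n) ^ (r - j)

/-- The point `e_1 = (1,0,…,0) ∈ ℂ^n`. -/
def e1vec (n : ℕ) : Fin n → ℂ := fun i => if (i : ℕ) = 0 then 1 else 0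

namespace PoincareAux

open Finset

variable {σ : Type*} [DecidableEq σ] {R : Type*} [CommRing R]

lemma finsupp_sum_eq_degree (u : σ →₀ ℕ) : (u.sum fun _ e => e) = u.degree := rfl

lemma degree_add (u w : σ →₀ ℕ) : (u + w).degree = u.degree + w.degree := by
  simp only [Finsupp.degree_eq_weight_one, map_add]

lemma degree_single (v : σ) (k : ℕ) : (Finsupp.single v k).degree = k := by
  rcases eq_or_ne k 0 with rfl | h
  · simp [Finsupp.degree]
  · rw [Finsupp.degree_apply, Finsupp.support_single_ne_zero _ h, Finset.sum_singleton,
      Finsupp.single_eq_same]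

lemma degree_erase_le (v : σ) (u : σ →₀ ℕ) : (u.erase v).degree ≤ u.degree := by
  conv_rhs => rw [← Finsupp.erase_add_single v u]
  rw [degree_add]
  exact Nat.le_add_right _ _

/-- homogenization with respect to variable `v`, aiming at degree `N`. -/
def hg (v : σ) (N : ℕ) (φ : MvPolynomial σ R) : MvPolynomial σ R :=
  ∑ j ∈ range (N + 1), homogeneousComponent j φ * X v ^ (N - j)

/-- dehomogenization: substitute `1` for the variable `v`. -/
def dh (v : σ) : MvPolynomial σ R →ₐ[R] MvPolynomial σ R :=
  aeval (fun i => if i = v then 1 else X i)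

/-- substitute `0` for the variable `v`. -/
def zh (v : σ) : MvPolynomial σ R →ₐ[R] MvPolynomial σ R :=
  aeval (fun i => if i = v then 0 else X i)

lemma dh_rename {τ : Type*} (v : σ) (k : τ → σ) (p : MvPolynomial τ R) :
    dh v (rename k p) = aeval (fun i => if k i = v then 1 else X (k i)) p := by
  unfold dh
  rw [aeval_rename]
  rfl

lemma zh_rename {τ : Type*} (v : σ) (k : τ → σ) (p : MvPolynomial τ R) :
    zh v (rename k p) = aeval (fun i => if k i = v then 0 else X (k i)) p := by
  unfold zh
  rw [aeval_rename]
  rfl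

@[simp] lemma hg_zero (v : σ) (N : ℕ) : hg v N (0 : MvPolynomial σ R) = 0 := by
  simp [hg]

lemma hc_monomial (j : ℕ) (u : σ →₀ ℕ) (c : R) :
    homogeneousComponent j (monomial u c) = if u.degree = j then monomial u c else 0 := by
  ext d
  rw [coeff_homogeneousComponent]
  by_cases hud : u = d
  · subst hud
    split_ifs <;> simp_all [coeff_monomial]
  · have h1 : coeff d (monomial u c) = 0 := by simp [coeff_monomial, hud]
    split_ifs <;> simp_all [coeff_monomial, hud]

lemma hg_monomial (v : σ) {N : ℕ} {u : σ →₀ ℕ} (c : R) (h : u.degree ≤ N) :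
    hg v N (monomial u c) = monomial u c * X v ^ (N - u.degree) := by
  unfold hg
  rw [Finset.sum_eq_single u.degree]
  · rw [hc_monomial, if_pos rfl]
  · intro j _ hne
    rw [hc_monomial, if_neg (fun hh => hne hh.symm), zero_mul]
  · intro h2
    exact absurd (mem_range.mpr (Nat.lt_succ_of_le h)) h2

lemma hg_sum {ι : Type*} (v : σ) (N : ℕ) (s : Finset ι) (f : ι → MvPolynomial σ R) :
    hg v N (∑ i ∈ s, f i) = ∑ i ∈ s, hg v N (f i) := by
  unfold hg
  simp_rw [map_sum, Finset.sum_mul]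
  exact Finset.sum_comm

lemma hg_isHomogeneous (v : σ) (N : ℕ) (φ : MvPolynomial σ R) :
    (hg v N φ).IsHomogeneous N := by
  refine IsHomogeneous.sum _ _ _ fun j hj => ?_
  have h := (homogeneousComponent_isHomogeneous j φ).mul (isHomogeneous_X_pow v (N - j))
  rwa [Nat.add_sub_cancel' (Nat.lt_succ_iff.mp (mem_range.mp hj))] at h

lemma hg_mul (v : σ) {a b : ℕ} {φ φ' : MvPolynomial σ R}
    (ha : φ.totalDegree ≤ a) (hb : φ'.totalDegree ≤ b) :
    hg v (a + b) (φ * φ') = hg v a φ * hg v b φ' := by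
  rw [φ.as_sum, φ'.as_sum, Finset.sum_mul_sum, hg_sum, hg_sum, hg_sum, Finset.sum_mul_sum]
  refine Finset.sum_congr rfl fun u hu => ?_
  rw [hg_sum]
  refine Finset.sum_congr rfl fun w hw => ?_
  have hua : u.degree ≤ a := le_trans (le_of_eq (finsupp_sum_eq_degree u).symm)
    (le_trans (le_totalDegree hu) ha)
  have hwb : w.degree ≤ b := le_trans (le_of_eq (finsupp_sum_eq_degree w).symm)
    (le_trans (le_totalDegree hw) hb)
  rw [monomial_mul, hg_monomial v _ (by rw [degree_add]; omega),
    hg_monomial v _ hua, hg_monomial v _ hwb, degree_add,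
    show a + b - (u.degree + w.degree) = (a - u.degree) + (b - w.degree) by omega,
    pow_add, ← monomial_mul]
  ring

lemma dh_monomial (v : σ) (u : σ →₀ ℕ) (c : R) :
    dh v (monomial u c) = monomial (u.erase v) c := by
  unfold dh
  rw [aeval_monomial, monomial_eq, algebraMap_eq]
  congr 1
  rw [Finsupp.prod, Finsupp.prod, Finsupp.support_erase]
  by_cases hv : v ∈ u.support
  · rw [← Finset.mul_prod_erase u.support _ hv, if_pos rfl, one_pow, one_mul]
    refine Finset.prod_congr rfl fun i hi => ?_
    have hne : i ≠ v := (Finset.mem_erase.mp hi).1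
    rw [if_neg hne, Finsupp.erase_ne hne]
  · rw [Finset.erase_eq_of_notMem hv]
    refine Finset.prod_congr rfl fun i hi => ?_
    have hne : i ≠ v := fun h => hv (h ▸ hi)
    rw [if_neg hne, Finsupp.erase_ne hne]

lemma totalDegree_dh_le (v : σ) (φ : MvPolynomial σ R) :
    (dh v φ).totalDegree ≤ φ.totalDegree := by
  conv_lhs => rw [φ.as_sum]
  rw [map_sum]
  refine le_trans (totalDegree_finset_sum _ _) (Finset.sup_le fun u hu => ?_)
  rw [dh_monomial]
  refine le_trans (totalDegree_monomial_le _ _) ?_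
  have h1 : ((u.erase v).sum fun _ (e : ℕ) => id e) = (u.erase v).degree := rfl
  rw [h1]
  exact le_trans (degree_erase_le v u)
    (le_of_eq_of_le (finsupp_sum_eq_degree u).symm (le_totalDegree hu))

lemma hg_dh_of_isHomogeneous {v : σ} {N : ℕ} {φ : MvPolynomial σ R}
    (h : φ.IsHomogeneous N) : hg v N (dh v φ) = φ := by
  have hrw := φ.as_sum
  rw [hrw, map_sum, hg_sum]
  refine Finset.sum_congr rfl fun u hu => ?_
  have hud : u.degree = N := by
    by_contra hne
    exact mem_support_iff.mp hu (h.coeff_eq_zero hne)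
  have herase : (u.erase v).degree + u v = u.degree := by
    conv_rhs => rw [← Finsupp.erase_add_single v u]
    rw [degree_add, degree_single]
  rw [dh_monomial, hg_monomial v _ (by omega),
    show N - (u.erase v).degree = u v by omega,
    X_pow_eq_monomial, monomial_mul, mul_one, Finsupp.erase_add_single]

lemma sum_hc_of_le {φ : MvPolynomial σ R} {N : ℕ} (h : φ.totalDegree ≤ N) :
    ∑ j ∈ range (N + 1), homogeneousComponent j φ = φ := by
  rw [← Finset.sum_subset (Finset.range_subset_range.mpr (by omega : φ.totalDegree + 1 ≤ N + 1))
    (fun j _ hj => homogeneousComponent_eq_zero j φ (by simp only [mem_range] at hj ⊢; omega))]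
  exact sum_homogeneousComponent φ

lemma hg_split (v : σ) {c N : ℕ} {φ : MvPolynomial σ R}
    (hφ : φ.totalDegree ≤ c) (hcN : c ≤ N) :
    hg v N φ = X v ^ (N - c) * hg v c φ := by
  unfold hg
  rw [Finset.mul_sum,
    ← Finset.sum_subset (Finset.range_subset_range.mpr (by omega : c + 1 ≤ N + 1))
      (fun j hj hj' => by
        rw [homogeneousComponent_eq_zero j φ
          (by simp only [mem_range] at hj hj' ⊢; omega), zero_mul])]
  refine Finset.sum_congr rfl fun j hj => ?_
  have hjc : j ≤ c := Nat.lt_succ_iff.mp (mem_range.mp hj)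
  rw [show N - j = (N - c) + (c - j) by omega, pow_add]
  ring

lemma hg_C (v : σ) (N : ℕ) (c : R) : hg v N (C c) = C c * X v ^ N := by
  rw [show (C c : MvPolynomial σ R) = monomial 0 c from rfl, hg_monomial v c (by simp),
    map_zero, Nat.sub_zero]

lemma hc_totalDegree_ne_zero {φ : MvPolynomial σ R} (h : φ ≠ 0) :
    homogeneousComponent φ.totalDegree φ ≠ 0 := by
  obtain ⟨u, hu, hdeg⟩ := Finset.exists_mem_eq_sup φ.support
    (Finset.nonempty_iff_ne_empty.mpr (fun he => h (support_eq_empty.mp he)))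
    (fun s => s.sum fun _ e => e)
  intro h0
  have hc := coeff_homogeneousComponent (φ := φ) φ.totalDegree u
  rw [h0, coeff_zero, if_pos (by rw [← finsupp_sum_eq_degree, ← hdeg]; rfl)] at hc
  exact mem_support_iff.mp hu hc.symm

lemma totalDegree_mul_eq [IsDomain R] {φ φ' : MvPolynomial σ R} (h : φ ≠ 0) (h' : φ' ≠ 0) :
    (φ * φ').totalDegree = φ.totalDegree + φ'.totalDegree := by
  set a := φ.totalDegree with ha
  set b := φ'.totalDegree with hb
  refine le_antisymm (totalDegree_mul _ _) ?_
  have e1 : φ * φ' = ∑ i ∈ range (a + 1), ∑ j ∈ range (b + 1),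
      homogeneousComponent i φ * homogeneousComponent j φ' := by
    rw [← Finset.sum_mul_sum, sum_hc_of_le le_rfl, sum_hc_of_le le_rfl]
  have key : homogeneousComponent (a + b) (φ * φ') =
      homogeneousComponent a φ * homogeneousComponent b φ' := by
    conv_lhs => rw [e1]
    rw [map_sum]
    have hmem : ∀ i j : ℕ, (homogeneousComponent i φ * homogeneousComponent j φ') ∈
        homogeneousSubmodule σ R (i + j) := fun i j =>
      (mem_homogeneousSubmodule _ _).mpr
        ((homogeneousComponent_isHomogeneous i φ).mul (homogeneousComponent_isHomogeneous j φ'))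
    rw [Finset.sum_eq_single_of_mem a (self_mem_range_succ a)]
    · rw [map_sum, Finset.sum_eq_single_of_mem b (self_mem_range_succ b)]
      · rw [homogeneousComponent_of_mem (hmem a b), if_pos rfl]
      · intro j hj hne
        rw [homogeneousComponent_of_mem (hmem a j),
          if_neg (show ¬ a + b = a + j by omega)]
    · intro i hi hne
      rw [map_sum, Finset.sum_eq_zero]
      intro j hj
      simp only [mem_range] at hi hj
      rw [homogeneousComponent_of_mem (hmem i j),
        if_neg (show ¬ a + b = i + j by omega)]
  by_contra hlt
  have h0 : homogeneousComponent (a + b) (φ * φ') = 0 :=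
    homogeneousComponent_eq_zero _ _ (by omega)
  rw [key] at h0
  rcases mul_eq_zero.mp h0 with h1 | h1
  · exact hc_totalDegree_ne_zero h h1
  · exact hc_totalDegree_ne_zero h' h1

lemma eq_C_of_totalDegree_eq_zero {φ : MvPolynomial σ R} (h : φ.totalDegree = 0) :
    φ = C (coeff 0 φ) := by
  ext d
  rcases eq_or_ne d 0 with rfl | hd
  · simp
  · rw [coeff_C, if_neg (Ne.symm hd)]
    by_contra hc
    have hmem : d ∈ φ.support := mem_support_iff.mpr hc
    have := le_totalDegree hmem
    rw [h, Nat.le_zero, finsupp_sum_eq_degree, Finsupp.degree_eq_zero_iff] at this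
    exact hd this

lemma exists_C_of_isUnit [IsDomain R] {φ : MvPolynomial σ R} (h : IsUnit φ) :
    ∃ c : R, IsUnit c ∧ φ = C c := by
  obtain ⟨q, hq⟩ := h.exists_right_inv
  have hφ0 : φ ≠ 0 := left_ne_zero_of_mul (hq ▸ one_ne_zero)
  have hq0 : q ≠ 0 := right_ne_zero_of_mul (hq ▸ one_ne_zero)
  have hd := totalDegree_mul_eq hφ0 hq0
  rw [hq, totalDegree_one] at hd
  refine ⟨coeff 0 φ, ?_, eq_C_of_totalDegree_eq_zero (by omega)⟩
  have := h.map (constantCoeff (σ := σ) (R := R))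
  rwa [constantCoeff_eq] at this

end PoincareAux

open PoincareAux Finset in
/-- If `ψ` is an irreducible polynomial of degree `r` whose top homogeneous part vanishes
at `e_1`, then the Poincaré transform `ψ*_{e_1}` is irreducible. -/
theorem stmt5 (n r : ℕ) (ψ : MvPolynomial (Fin n) ℂ)
    (hirr : Irreducible ψ)
    (hdeg : ψ.totalDegree = r)
    (htop : eval (e1vec n) (homogeneousComponent r ψ) = 0) :
    Irreducible (poincareT n r ψ) := by
  classical
  have hψ0 : ψ ≠ 0 := hirr.ne_zero
  rcases Nat.eq_zero_or_pos r with rfl | hr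
  · exfalso
    have hC := eq_C_of_totalDegree_eq_zero hdeg
    have hc0 : coeff 0 ψ ≠ 0 := fun h => hψ0 (by rw [hC, h, map_zero])
    exact hirr.not_isUnit (hC ▸ (isUnit_iff_ne_zero.mpr hc0).map (C : ℂ →+* _))
  rcases Nat.eq_zero_or_pos n with rfl | hn
  · exfalso
    have hd0 : ψ.totalDegree = 0 := by
      apply Nat.eq_zero_of_le_zero
      apply Finset.sup_le
      intro u hu
      have he : u.support = ∅ := Finset.eq_empty_of_isEmpty _
      rw [Finsupp.sum, he, Finset.sum_empty]
    omega
  obtain ⟨m, rfl⟩ : ∃ m, n = m + 1 := ⟨n - 1, by omega⟩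
  set lst : Fin (m + 1 + 1) := Fin.last (m + 1) with hlst
  have hlst0 : lst ≠ 0 := by
    rw [hlst, Fin.ne_iff_vne]
    simp
  have hcsl : ∀ i : Fin (m + 1), Fin.castSucc i ≠ lst := fun i => (Fin.castSucc_lt_last i).ne
  have hcsinj : Function.Injective (Fin.castSucc : Fin (m + 1) → Fin (m + 1 + 1)) :=
    Fin.castSucc_injective _
  set ψt : MvPolynomial (Fin (m + 1 + 1)) ℂ := rename Fin.castSucc ψ with hψtdef
  -- primality / irreducibility of ψt
  have hψt_irr : Irreducible ψt := by
    have hp : Prime ψ := (UniqueFactorizationMonoid.irreducible_iff_prime).mp hirr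
    have h2 : Prime (rename (Equiv.ofInjective _ hcsinj) ψ) := by
      have h3 := (MulEquiv.prime_iff (renameEquiv ℂ (Equiv.ofInjective _ hcsinj)).toMulEquiv
        (p := ψ)).mpr hp
      simpa using h3
    have h4 := (MvPolynomial.prime_rename_iff
      (Set.range (Fin.castSucc : Fin (m + 1) → Fin (m + 1 + 1)))).mpr h2
    rw [rename_rename] at h4
    have h5 : (Subtype.val ∘ (Equiv.ofInjective _ hcsinj)) =
        (Fin.castSucc : Fin (m + 1) → Fin (m + 1 + 1)) := by
      funext i; simp
    rw [h5] at h4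
    exact h4.irreducible
  have hψtne : ψt ≠ 0 := hψt_irr.ne_zero
  -- the homogenization Φ
  set Φ : MvPolynomial (Fin (m + 1 + 1)) ℂ :=
    ∑ j ∈ range (r + 1),
      rename Fin.castSucc (homogeneousComponent j ψ) * X lst ^ (r - j) with hΦdef
  have hΦhom : Φ.IsHomogeneous r := by
    refine IsHomogeneous.sum _ _ _ fun j hj => ?_
    have h := ((homogeneousComponent_isHomogeneous j ψ).rename_isHomogeneous
      (f := Fin.castSucc)).mul (isHomogeneous_X_pow lst (r - j))
    rwa [Nat.add_sub_cancel' (Nat.lt_succ_iff.mp (mem_range.mp hj))] at h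
  set χ := poincareT (m + 1) r ψ with hχdef
  -- dehomogenization at 0 gives χ
  have hdh0 : dh (0 : Fin (m + 1 + 1)) Φ = χ := by
    rw [hΦdef, hχdef, poincareT, map_sum]
    refine Finset.sum_congr rfl fun j hj => ?_
    rw [map_mul, map_pow]
    have h1 : dh (0 : Fin (m + 1 + 1)) (rename Fin.castSucc (homogeneousComponent j ψ)) =
        aeval (fun i : Fin (m + 1) => if (i : ℕ) = 0 then 1 else X i.castSucc)
          (homogeneousComponent j ψ) := by
      have hfun : (fun i : Fin (m+1) => if Fin.castSucc i = 0
            then (1 : MvPolynomial (Fin (m+1+1)) ℂ) else X (Fin.castSucc i))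
          = fun i : Fin (m+1) => if (i : ℕ) = 0 then 1 else X i.castSucc := by
        funext i
        by_cases h : (i : ℕ) = 0 <;>
          simp [Fin.ext_iff, h]
      rw [dh_rename, hfun]
    have h2 : dh (0 : Fin (m + 1 + 1)) (X lst : MvPolynomial (Fin (m+1+1)) ℂ) = X lst := by
      simp [dh, hlst0]
    rw [h1, h2]
  -- dehomogenization at lst gives ψt
  have hdhren : ∀ q : MvPolynomial (Fin (m + 1)) ℂ,
      dh lst (rename Fin.castSucc q) = rename Fin.castSucc q := by
    intro q
    rw [dh_rename,
      show (fun i : Fin (m+1) => if Fin.castSucc i = lst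
          then (1 : MvPolynomial (Fin (m+1+1)) ℂ) else X (Fin.castSucc i))
        = fun i => X (Fin.castSucc i) from funext fun i => by simp [hcsl i]]
    rw [rename_eq_aeval]; rfl
  have hdhXlst : dh lst (X lst : MvPolynomial (Fin (m+1+1)) ℂ) = 1 := by simp [dh]
  have hdhX0 : dh lst (X (0 : Fin (m+1+1)) : MvPolynomial (Fin (m+1+1)) ℂ) = X 0 := by
    simp [dh, (Ne.symm hlst0)]
  have hdhlast : dh lst Φ = ψt := by
    rw [hΦdef, map_sum]
    have h1 : ∀ j ∈ range (r + 1),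
        dh lst (rename Fin.castSucc (homogeneousComponent j ψ) * X lst ^ (r - j)) =
        rename Fin.castSucc (homogeneousComponent j ψ) := by
      intro j _
      rw [map_mul, map_pow, hdhren, hdhXlst, one_pow, mul_one]
    rw [Finset.sum_congr rfl h1, ← map_sum, sum_hc_of_le (le_of_eq hdeg)]
  -- the evaluation Z (kill variable lst)
  have hZren : ∀ q : MvPolynomial (Fin (m + 1)) ℂ,
      zh lst (rename Fin.castSucc q) = rename Fin.castSucc q := by
    intro q
    rw [zh_rename,
      show (fun i : Fin (m+1) => if Fin.castSucc i = lst
          then (0 : MvPolynomial (Fin (m+1+1)) ℂ) else X (Fin.castSucc i))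
        = fun i => X (Fin.castSucc i) from funext fun i => by simp [hcsl i]]
    rw [rename_eq_aeval]; rfl
  have hZX : zh lst (X lst : MvPolynomial (Fin (m+1+1)) ℂ) = 0 := by simp [zh]
  have hZΦ : zh lst Φ = rename Fin.castSucc (homogeneousComponent r ψ) := by
    rw [hΦdef, map_sum, Finset.sum_eq_single_of_mem r (self_mem_range_succ r)]
    · rw [map_mul, map_pow, hZren, hZX, Nat.sub_self, pow_zero, mul_one]
    · intro j hj hne
      rw [map_mul, map_pow, hZX, zero_pow (show r - j ≠ 0 by
        simp only [mem_range] at hj; omega), mul_zero]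
  have hhcr : homogeneousComponent r ψ ≠ 0 := by
    have h := hc_totalDegree_ne_zero hψ0
    rwa [hdeg] at h
  -- X 0 does not divide ψt
  have hX0 : ¬ (X (0 : Fin (m + 1 + 1)) ∣ ψt) := by
    rintro ⟨t, ht⟩
    rcases hψt_irr.isUnit_or_isUnit ht with h | h
    · have h2 := h.map (constantCoeff (σ := Fin (m + 1 + 1)) (R := ℂ))
      rw [constantCoeff_X] at h2
      exact not_isUnit_zero h2
    · obtain ⟨c, hc, rfl⟩ := exists_C_of_isUnit h
      have hψeq : ψ = C c * X 0 := by
        apply rename_injective _ hcsinj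
        rw [← hψtdef, ht, map_mul, rename_C, rename_X, Fin.castSucc_zero, mul_comm]
      have hCX : (C c * X 0 : MvPolynomial (Fin (m + 1)) ℂ) =
          monomial (Finsupp.single 0 1) c := by
        rw [← C_mul_X_pow_eq_monomial, pow_one]
      have hr1 : r = 1 := by
        have hcne : c ≠ 0 := hc.ne_zero
        rw [hψeq, hCX, totalDegree_monomial _ hcne, finsupp_sum_eq_degree,
          degree_single] at hdeg
        omega
      have hmem : ψ ∈ homogeneousSubmodule (Fin (m + 1)) ℂ 1 :=
        (mem_homogeneousSubmodule _ _).mpr (hψeq ▸ isHomogeneous_C_mul_X c 0)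
      subst hr1
      have hhc1 : homogeneousComponent 1 ψ = ψ := by
        rw [homogeneousComponent_of_mem hmem]
        simp
      rw [hhc1, hψeq] at htop
      simp only [eval_mul, eval_C, eval_X] at htop
      rw [show e1vec (m + 1) 0 = 1 by simp [e1vec], mul_one] at htop
      exact hc.ne_zero htop
  -- main setup
  have hB : hg (0 : Fin (m + 1 + 1)) r χ = Φ := by
    rw [← hdh0]; exact hg_dh_of_isHomogeneous hΦhom
  have hΦ0 : Φ ≠ 0 := fun h => hψtne (by rw [← hdhlast, h, map_zero])
  have hχ0 : χ ≠ 0 := fun h => hΦ0 (by rw [← hB, h, hg_zero])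
  have hχdeg : χ.totalDegree ≤ r := by
    rw [← hdh0]
    exact le_trans (totalDegree_dh_le _ _) hΦhom.totalDegree_le
  constructor
  · intro hu
    obtain ⟨c, hc, hCc⟩ := exists_C_of_isUnit hu
    apply hX0
    have hΦC : Φ = C c * X (0 : Fin (m + 1 + 1)) ^ r := by rw [← hB, hCc, hg_C]
    have hψteq : ψt = C c * X 0 ^ r := by
      rw [← hdhlast, hΦC, map_mul, map_pow, hdhX0]
      congr 1
      simp [dh]
    rw [hψteq]
    exact dvd_mul_of_dvd_right (dvd_pow_self _ (by omega)) _
  · intro f g hfg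
    have hfne : f ≠ 0 := fun h => hχ0 (by rw [hfg, h, zero_mul])
    have hgne : g ≠ 0 := fun h => hχ0 (by rw [hfg, h, mul_zero])
    have hab : χ.totalDegree = f.totalDegree + g.totalDegree := by
      rw [hfg]; exact totalDegree_mul_eq hfne hgne
    have habr : f.totalDegree + g.totalDegree ≤ r := hab ▸ hχdeg
    have hsplit0 : Φ = X (0 : Fin (m + 1 + 1)) ^ (r - (f.totalDegree + g.totalDegree)) *
        (hg 0 f.totalDegree f * hg 0 g.totalDegree g) := by
      rw [← hB, hg_split (0 : Fin (m + 1 + 1)) (le_of_eq hab) habr, hfg,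
        hg_mul _ le_rfl le_rfl]
    have her : r = f.totalDegree + g.totalDegree := by
      by_contra hne
      apply hX0
      rw [← hdhlast, hsplit0, map_mul, map_pow, hdhX0]
      exact dvd_mul_of_dvd_left (dvd_pow_self _ (by omega)) _
    rw [her, Nat.sub_self, pow_zero, one_mul] at hsplit0
    have key : ∀ p W : MvPolynomial (Fin (m + 1 + 1)) ℂ, p ≠ 0 →
        Φ = hg 0 p.totalDegree p * W →
        IsUnit (dh lst (hg (0 : Fin (m + 1 + 1)) p.totalDegree p)) → IsUnit p := by
      intro p W hp0 hΦeq hu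
      obtain ⟨c, hc, hCc⟩ := exists_C_of_isUnit hu
      rcases Nat.eq_zero_or_pos p.totalDegree with hd0 | hdpos
      · have hpC := eq_C_of_totalDegree_eq_zero hd0
        have hne : coeff 0 p ≠ 0 := fun h => hp0 (by rw [hpC, h, map_zero])
        exact hpC ▸ (isUnit_iff_ne_zero.mpr hne).map (C : ℂ →+* _)
      · exfalso
        have hFeq : hg (0 : Fin (m + 1 + 1)) p.totalDegree p =
            C c * X lst ^ p.totalDegree := by
          conv_lhs => rw [← hg_dh_of_isHomogeneous (v := lst)
            (hg_isHomogeneous (0 : Fin (m + 1 + 1)) p.totalDegree p)]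
          rw [hCc, hg_C]
        have hZ0 : zh lst Φ = 0 := by
          rw [hΦeq, map_mul, hFeq, map_mul, map_pow, hZX,
            zero_pow (by omega), mul_zero, zero_mul]
        rw [hZΦ] at hZ0
        exact hhcr (rename_injective _ hcsinj (by rw [hZ0, map_zero]))
    rcases hψt_irr.isUnit_or_isUnit (show ψt = _ * _ by
        rw [← hdhlast, hsplit0, map_mul]) with h | h
    · exact Or.inl (key f (hg 0 g.totalDegree g) hfne hsplit0 h)
    · exact Or.inr (key g (hg 0 f.totalDegree f) hgne (by rw [hsplit0, mul_comm]) h)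
end
end

section
/- Let ψ_1, ψ_2 ∈ ℂ[x_1,…,x_n] be relatively prime polynomials of degrees r_1, r_2 whose top-degree homogeneous parts both vanish at e_1 = (1,0,…,0), i.e., ψ_1^{(r_1)}(e_1) = ψ_2^{(r_2)}(e_1) = 0. Then the Poincaré transforms ψ_1*_{e_1} and ψ_2*_{e_1} are relatively prime in ℂ[x_2,…,x_{n+1}]. -/
open MvPolynomial

noncomputable section
set_option maxHeartbeats 1000000
set_option synthInstance.maxHeartbeats 200000

namespace PoincareAux

lemma homog_eval₂_smul {S : Type*} [CommRing S] (f : ℂ →+* S) {σ : Type*}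
    {p : MvPolynomial σ ℂ} {m : ℕ} (hp : p.IsHomogeneous m) (c : S) (v : σ → S) :
    eval₂ f (fun i => c * v i) p = c ^ m * eval₂ f v p := by
  rw [eval₂_eq, eval₂_eq, Finset.mul_sum]
  apply Finset.sum_congr rfl
  intro d hd
  have hdeg : ∑ i ∈ d.support, d i = m := by
    have := hp (mem_support_iff.mp hd)
    simpa [Finsupp.weight, Finsupp.linearCombination, Finsupp.sum] using this
  rw [← hdeg]
  simp only [mul_pow]
  rw [Finset.prod_mul_distrib, Finset.prod_pow_eq_pow_sum]
  ring

variable (n : ℕ)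

abbrev Rn := MvPolynomial (Fin (n+1)) ℂ
abbrev An := MvPolynomial (Fin n) ℂ
abbrev Fn := FractionRing (Rn n)

def em : Rn n →+* Fn n := algebraMap _ _

lemma em_inj : Function.Injective (em n) := IsFractionRing.injective _ _

lemma emX_ne (j : Fin (n+1)) : em n (X j) ≠ 0 := by
  intro h
  exact X_ne_zero j (em_inj n (by simpa using h))

/-- the variable map of the "reverse" substitution τ. -/
def tmap : Fin (n+1) → Fn n := fun j =>
  if j = 0 then em n (X (Fin.last n))
  else if j = Fin.last n then (em n (X 0))⁻¹
  else em n (X j) * (em n (X 0))⁻¹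

def tau : Rn n →+* Fn n := eval₂Hom ((em n).comp C) (tmap n)

/-- the variable map of the "forward" substitution σ. -/
def smap : Fin (n+1) → Fn n := fun j =>
  if j = Fin.last n then em n (X 0)
  else if j = 0 then (em n (X (Fin.last n)))⁻¹
  else em n (X j) * (em n (X (Fin.last n)))⁻¹

def sigma' : Rn n →+* Fn n := eval₂Hom ((em n).comp C) (smap n)

def wS : Fin (n+1) → Rn n := fun j =>
  if j = 0 then X 0 * X (Fin.last n) else if j = Fin.last n then 1 else X j

def wT : Fin (n+1) → Rn n := fun j =>
  if j = Fin.last n then X 0 * X (Fin.last n) else if j = 0 then 1 else X j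

def Srev (s : ℕ) (q : Rn n) : Rn n :=
  ∑ j ∈ Finset.range (s+1), aeval (wS n) (homogeneousComponent j q) * X 0 ^ (s - j)

def Tfwd (s : ℕ) (q : Rn n) : Rn n :=
  ∑ j ∈ Finset.range (s+1), aeval (wT n) (homogeneousComponent j q) * X (Fin.last n) ^ (s - j)

variable {n}
variable (h0 : (0 : Fin (n+1)) ≠ Fin.last n)

lemma em_aeval_rep {m : ℕ} (g : Fin m → Rn n) (h : MvPolynomial (Fin m) ℂ) :
    em n (aeval g h) = eval₂ ((em n).comp C) (fun i => em n (g i)) h := by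
  rw [aeval_def, algebraMap_eq, eval₂_comp_left]
  rfl

lemma sigma_X (j : Fin (n+1)) : sigma' n (X j) = smap n j := eval₂Hom_X' _ _ _

lemma tau_X (j : Fin (n+1)) : tau n (X j) = tmap n j := eval₂Hom_X' _ _ _

lemma sum_comp_le {σ : Type*} {s : ℕ} (q : MvPolynomial σ ℂ) (hs : q.totalDegree ≤ s) :
    (∑ j ∈ Finset.range (s+1), homogeneousComponent j q) = q := by
  rw [← Finset.sum_subset (Finset.range_subset_range.2 (Nat.succ_le_succ hs))
    (fun j hj hnj => homogeneousComponent_eq_zero j q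
      (by simp only [Finset.mem_range] at hj hnj; omega)),
    sum_homogeneousComponent]

include h0 in
/-- componentwise identity for τ -/
lemma tau_aevalwS {j : ℕ} {h : Rn n} (hh : h.IsHomogeneous j) :
    tau n h * (em n (X 0)) ^ j = em n (aeval (wS n) h) := by
  have hX0 : em n (X 0) ≠ 0 := emX_ne n 0
  have hXl : em n (X (Fin.last n)) ≠ 0 := emX_ne n (Fin.last n)
  have h1 : em n (aeval (wS n) h) = eval₂ ((em n).comp C) (fun i => em n (wS n i)) h := by
    rw [aeval_def, algebraMap_eq, eval₂_comp_left]
    rfl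
  have h2 : tau n h = eval₂ ((em n).comp C)
      (fun i => (em n (X 0))⁻¹ * em n (wS n i)) h := by
    show eval₂ ((em n).comp C) (tmap n) h = _
    congr 1
    funext i
    by_cases hi0 : i = 0
    · subst hi0
      simp only [tmap, wS, if_pos rfl, map_mul, ↓reduceIte]
      field_simp
    · by_cases hil : i = Fin.last n
      · subst hil
        simp [tmap, wS, Ne.symm h0, h0]
      · simp only [tmap, wS, if_neg hi0, if_neg hil]
        ring
  rw [h2, homog_eval₂_smul _ hh, h1]
  rw [inv_pow]
  field_simp

include h0 in
lemma tau_Srev {s : ℕ} (q : Rn n) (hs : q.totalDegree ≤ s) :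
    tau n q * (em n (X 0)) ^ s = em n (Srev n s q) := by
  have hX0 : em n (X 0) ≠ 0 := emX_ne n 0
  conv_lhs => rw [← sum_comp_le q hs]
  rw [Srev, map_sum, map_sum, Finset.sum_mul]
  apply Finset.sum_congr rfl
  intro j hj
  simp only [Finset.mem_range] at hj
  rw [map_mul, ← tau_aevalwS h0 (homogeneousComponent_isHomogeneous j q), map_pow]
  rw [mul_assoc, ← pow_add]
  congr 2
  omega

include h0 in
lemma sigma_aevalwT {j : ℕ} {h : Rn n} (hh : h.IsHomogeneous j) :
    sigma' n h * (em n (X (Fin.last n))) ^ j = em n (aeval (wT n) h) := by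
  have hXl : em n (X (Fin.last n)) ≠ 0 := emX_ne n (Fin.last n)
  have h1 := em_aeval_rep (wT n) h
  have h2 : sigma' n h = eval₂ ((em n).comp C)
      (fun i => (em n (X (Fin.last n)))⁻¹ * em n (wT n i)) h := by
    show eval₂ ((em n).comp C) (smap n) h = _
    congr 1
    funext i
    by_cases hil : i = Fin.last n
    · subst hil
      simp [smap, wT, Ne.symm h0, h0]
      field_simp
    · by_cases hi0 : i = 0
      · subst hi0
        simp [smap, wT, Ne.symm h0, h0]
      · simp only [smap, wT, if_neg hi0, if_neg hil]
        ring
  rw [h2, homog_eval₂_smul _ hh, h1, inv_pow]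
  field_simp

include h0 in
lemma sigma_Tfwd {s : ℕ} (q : Rn n) (hs : q.totalDegree ≤ s) :
    sigma' n q * (em n (X (Fin.last n))) ^ s = em n (Tfwd n s q) := by
  conv_lhs => rw [← sum_comp_le q hs]
  rw [Tfwd, map_sum, map_sum, Finset.sum_mul]
  apply Finset.sum_congr rfl
  intro j hj
  simp only [Finset.mem_range] at hj
  rw [map_mul, ← sigma_aevalwT h0 (homogeneousComponent_isHomogeneous j q), map_pow]
  rw [mul_assoc, ← pow_add]
  congr 2
  omega

include h0 in
lemma sigma_aevalwS {j : ℕ} {h : Rn n} (hh : h.IsHomogeneous j) :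
    sigma' n (aeval (wS n) h) * (em n (X (Fin.last n))) ^ j = em n h := by
  have hXl : em n (X (Fin.last n)) ≠ 0 := emX_ne n (Fin.last n)
  have h1 : sigma' n (aeval (wS n) h) = eval₂ ((em n).comp C)
      (fun i => (em n (X (Fin.last n)))⁻¹ * em n (X i)) h := by
    rw [show (aeval (wS n)) h = eval₂ C (wS n) h by rw [aeval_def, algebraMap_eq]]
    rw [eval₂_comp_left (sigma' n) C (wS n) h]
    have hC : (sigma' n).comp C = (em n).comp C := by
      ext c
      simp [sigma', eval₂Hom_C]
    rw [hC]
    congr 1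
    funext i
    by_cases hi0 : i = 0
    · subst hi0
      simp [wS, sigma_X, smap, h0, Ne.symm h0]
    · by_cases hil : i = Fin.last n
      · subst hil
        simp [wS, sigma_X, smap, h0, Ne.symm h0]
        field_simp
      · simp [wS, sigma_X, smap, hi0, hil]
        ring
  have h3 : eval₂ ((em n).comp C) (fun i => em n (X i)) h = em n h := by
    rw [show (fun i => em n (X i)) = (⇑(em n) ∘ X) from rfl, ← eval₂_comp_left, eval₂_eta]
  rw [h1, homog_eval₂_smul _ hh, h3, inv_pow]
  field_simp

include h0 in
lemma propC {s : ℕ} (q : Rn n) (hs : q.totalDegree ≤ s) :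
    Tfwd n (max s (Srev n s q).totalDegree) (Srev n s q)
      = X (Fin.last n) ^ (max s (Srev n s q).totalDegree - s) * q := by
  have hXl : em n (X (Fin.last n)) ≠ 0 := emX_ne n (Fin.last n)
  set s' := max s (Srev n s q).totalDegree with hs'
  apply em_inj n
  rw [← sigma_Tfwd h0 _ (le_max_right _ _)]
  have key : sigma' n (Srev n s q) * (em n (X (Fin.last n))) ^ s = em n q := by
    rw [Srev, map_sum, Finset.sum_mul]
    have hterm : ∀ j ∈ Finset.range (s+1),
        sigma' n (aeval (wS n) (homogeneousComponent j q) * X 0 ^ (s - j))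
          * (em n (X (Fin.last n))) ^ s = em n (homogeneousComponent j q) := by
      intro j hj
      simp only [Finset.mem_range] at hj
      rw [map_mul, map_pow, sigma_X]
      have hsm : smap n 0 = (em n (X (Fin.last n)))⁻¹ := by simp [smap, h0]
      rw [hsm]
      have h2 := sigma_aevalwS h0 (homogeneousComponent_isHomogeneous j q)
      have hsplit : (em n (X (Fin.last n)))^s
          = (em n (X (Fin.last n)))^j * (em n (X (Fin.last n)))^(s-j) := by
        rw [← pow_add]; congr 1; omega
      calc sigma' n (aeval (wS n) (homogeneousComponent j q))
            * ((em n (X (Fin.last n)))⁻¹) ^ (s - j) * (em n (X (Fin.last n))) ^ s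
          = (sigma' n (aeval (wS n) (homogeneousComponent j q))
              * (em n (X (Fin.last n))) ^ j)
            * (((em n (X (Fin.last n)))⁻¹) ^ (s-j) * (em n (X (Fin.last n))) ^ (s-j)) := by
            rw [hsplit]; ring
        _ = em n (homogeneousComponent j q) := by
            rw [h2, ← mul_pow, inv_mul_cancel₀ hXl, one_pow, mul_one]
    rw [Finset.sum_congr rfl hterm,
      ← map_sum (em n) (fun j => homogeneousComponent j q) (Finset.range (s+1)),
      sum_comp_le q hs]
  have hsplit2 : (em n (X (Fin.last n)))^s'
      = (em n (X (Fin.last n)))^s * (em n (X (Fin.last n)))^(s'-s) := by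
    rw [← pow_add]; congr 1
    have := le_max_left s (Srev n s q).totalDegree
    omega
  rw [hsplit2, ← mul_assoc, key, map_mul, map_pow]
  ring

omit h0 in
lemma tau_Dcomp {j : ℕ} {h : An n} (hh : h.IsHomogeneous j) :
    tau n (aeval (fun i : Fin n => if (i : ℕ) = 0 then 1 else X i.castSucc) h)
      * (em n (X 0)) ^ j = em n (rename Fin.castSucc h) := by
  have hX0 : em n (X 0) ≠ 0 := emX_ne n 0
  have h1 : tau n (aeval (fun i : Fin n => if (i : ℕ) = 0 then 1 else X i.castSucc) h)
      = eval₂ ((em n).comp C) (fun i : Fin n => (em n (X 0))⁻¹ * em n (X i.castSucc)) h := by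
    rw [show (aeval (fun i : Fin n => if (i : ℕ) = 0 then (1 : Rn n) else X i.castSucc)) h
        = eval₂ C (fun i : Fin n => if (i : ℕ) = 0 then (1 : Rn n) else X i.castSucc) h from by
      rw [aeval_def, algebraMap_eq]]
    rw [eval₂_comp_left (tau n) C _ h]
    have hC : (tau n).comp C = (em n).comp C := by
      ext c
      simp [tau, eval₂Hom_C]
    rw [hC]
    congr 1
    funext i
    by_cases hi0 : (i : ℕ) = 0
    · have hcs : i.castSucc = 0 := by
        ext
        simpa using hi0
      simp only [Function.comp_apply, if_pos hi0, map_one, hcs]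
      field_simp
    · have hc0 : i.castSucc ≠ 0 := by
        intro hh
        exact hi0 (by simpa using congrArg Fin.val hh)
      have hcl : i.castSucc ≠ Fin.last n := (Fin.castSucc_lt_last i).ne
      simp only [Function.comp_apply, if_neg hi0, tau_X, tmap, if_neg hc0, if_neg hcl]
      ring
  have h2 : em n (rename Fin.castSucc h)
      = eval₂ ((em n).comp C) (fun i : Fin n => em n (X i.castSucc)) h := by
    have : (rename Fin.castSucc h : Rn n) = aeval (fun i : Fin n => X i.castSucc) h := by
      rw [rename_eq_aeval]; rfl
    rw [this, em_aeval_rep]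
  rw [h1, homog_eval₂_smul _ hh, h2, inv_pow]
  field_simp

include h0 in
lemma tau_poincareT {r : ℕ} (ψ : An n) (hr : ψ.totalDegree = r) :
    tau n (poincareT n r ψ) * (em n (X 0)) ^ r = em n (rename Fin.castSucc ψ) := by
  have hX0 : em n (X 0) ≠ 0 := emX_ne n 0
  rw [poincareT, map_sum, Finset.sum_mul]
  have hterm : ∀ j ∈ Finset.range (r+1),
      tau n (aeval (fun i : Fin n => if (i : ℕ) = 0 then 1 else X i.castSucc)
          (homogeneousComponent j ψ) * X (Fin.last n) ^ (r - j))
        * (em n (X 0)) ^ r = em n (rename Fin.castSucc (homogeneousComponent j ψ)) := by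
    intro j hj
    simp only [Finset.mem_range] at hj
    rw [map_mul, map_pow, tau_X]
    have htl : tmap n (Fin.last n) = (em n (X 0))⁻¹ := by simp [tmap, Ne.symm h0]
    rw [htl]
    have h2 := tau_Dcomp (homogeneousComponent_isHomogeneous j ψ)
    have hsplit : (em n (X 0))^r = (em n (X 0))^j * (em n (X 0))^(r-j) := by
      rw [← pow_add]; congr 1; omega
    calc tau n (aeval (fun i : Fin n => if (i : ℕ) = 0 then 1 else X i.castSucc)
            (homogeneousComponent j ψ)) * ((em n (X 0))⁻¹) ^ (r - j) * (em n (X 0)) ^ r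
        = (tau n (aeval (fun i : Fin n => if (i : ℕ) = 0 then 1 else X i.castSucc)
            (homogeneousComponent j ψ)) * (em n (X 0)) ^ j)
          * (((em n (X 0))⁻¹) ^ (r-j) * (em n (X 0)) ^ (r-j)) := by
          rw [hsplit]; ring
      _ = em n (rename Fin.castSucc (homogeneousComponent j ψ)) := by
          rw [h2, ← mul_pow, inv_mul_cancel₀ hX0, one_pow, mul_one]
  rw [Finset.sum_congr rfl hterm,
    ← map_sum (em n) (fun j => rename Fin.castSucc (homogeneousComponent j ψ)) (Finset.range (r+1)),
    ← map_sum (rename Fin.castSucc) (fun j => homogeneousComponent j ψ) (Finset.range (r+1)),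
    sum_comp_le ψ (le_of_eq hr)]


omit h0

lemma comp_totalDegree_ne_zero {σ : Type*} {ψ : MvPolynomial σ ℂ} (hψ : ψ ≠ 0) :
    homogeneousComponent ψ.totalDegree ψ ≠ 0 := by
  obtain ⟨d, hd, hsup⟩ := ψ.support.exists_mem_eq_sup
    (support_nonempty.mpr hψ) (fun m : σ →₀ ℕ => m.sum fun _ e => e)
  have hdeg : d.degree = ψ.totalDegree := by
    rw [totalDegree, hsup, Finsupp.degree, Finsupp.sum]
    rfl
  intro hcontra
  have : coeff d (homogeneousComponent ψ.totalDegree ψ) = coeff d ψ := by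
    rw [coeff_homogeneousComponent, if_pos hdeg]
  rw [hcontra, coeff_zero] at this
  exact (mem_support_iff.mp hd) this.symm

lemma lemX {r : ℕ} {ψ : An n} (hψ : ψ ≠ 0) (hr : ψ.totalDegree = r) :
    ¬ (X (Fin.last n) ∣ poincareT n r ψ) := by
  rintro ⟨g, hg⟩
  set e0 : Rn n →+* Rn n :=
    eval₂Hom (C : ℂ →+* Rn n) (fun j => if j = Fin.last n then 0 else X j) with he0def
  have he0X : e0 (X (Fin.last n)) = 0 := by
    rw [he0def, eval₂Hom_X', if_pos rfl]
  have hz : e0 (poincareT n r ψ) = 0 := by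
    rw [hg, map_mul, he0X, zero_mul]
  have hterm : ∀ j ∈ Finset.range (r+1),
      e0 (aeval (fun i : Fin n => if (i : ℕ) = 0 then 1 else X i.castSucc)
          (homogeneousComponent j ψ) * X (Fin.last n) ^ (r - j))
        = if j = r then
            aeval (fun i : Fin n => if (i : ℕ) = 0 then 1 else X i.castSucc)
              (homogeneousComponent r ψ)
          else 0 := by
    intro j hj
    simp only [Finset.mem_range] at hj
    rw [map_mul, map_pow, he0X]
    by_cases hjr : j = r
    · subst hjr
      rw [if_pos rfl, Nat.sub_self, pow_zero, mul_one]
      have : e0 (aeval (fun i : Fin n => if (i : ℕ) = 0 then 1 else X i.castSucc)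
          (homogeneousComponent j ψ))
          = eval₂ ((e0).comp C) (fun i : Fin n =>
              e0 (if (i : ℕ) = 0 then 1 else X i.castSucc)) (homogeneousComponent j ψ) := by
        rw [show (aeval (fun i : Fin n => if (i : ℕ) = 0 then (1 : Rn n) else X i.castSucc))
            (homogeneousComponent j ψ) = eval₂ C _ (homogeneousComponent j ψ) from by
          rw [aeval_def, algebraMap_eq]]
        rw [eval₂_comp_left]
        rfl
      rw [this]
      have hCe : (e0).comp C = (C : ℂ →+* Rn n) := by
        ext c
        simp [he0def]
      rw [hCe]
      rw [show (fun i : Fin n => e0 (if (i : ℕ) = 0 then 1 else X i.castSucc))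
          = (fun i : Fin n => if (i : ℕ) = 0 then (1 : Rn n) else X i.castSucc) from ?_]
      · rfl
      · funext i
        by_cases hi0 : (i : ℕ) = 0
        · simp [hi0]
        · have hcl : i.castSucc ≠ Fin.last n := (Fin.castSucc_lt_last i).ne
          simp [hi0, he0def, hcl]
    · rw [if_neg hjr, zero_pow (by omega), mul_zero]
  rw [poincareT, map_sum, Finset.sum_congr rfl hterm, Finset.sum_ite_eq' _ r,
    if_pos (by simp)] at hz
  -- hz : aeval sub (comp r ψ) = 0
  have h2 := tau_Dcomp (n := n) (homogeneousComponent_isHomogeneous r ψ)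
  rw [hz, map_zero, zero_mul] at h2
  have h3 : rename (Fin.castSucc : Fin n → Fin (n+1)) (homogeneousComponent r ψ) = 0 :=
    em_inj n (by rw [← h2, map_zero])
  have h4 : homogeneousComponent r ψ = 0 := by
    have hinj : Function.Injective (rename (R := ℂ) (Fin.castSucc : Fin n → Fin (n+1))) :=
      rename_injective _ (Fin.castSucc_injective n)
    exact hinj (by rw [h3, map_zero])
  rw [← hr] at h4
  exact comp_totalDegree_ne_zero hψ h4


include h0 in
lemma poincareT_ne_zero {r : ℕ} {ψ : An n} (hψ : ψ ≠ 0) (hr : ψ.totalDegree = r) :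
    poincareT n r ψ ≠ 0 := by
  intro h
  have h2 := tau_poincareT h0 ψ hr
  rw [h, map_zero, zero_mul] at h2
  have h3 : rename (Fin.castSucc : Fin n → Fin (n+1)) ψ = 0 :=
    em_inj n (by rw [← h2, map_zero])
  have hinj : Function.Injective (rename (R := ℂ) (Fin.castSucc : Fin n → Fin (n+1))) :=
    rename_injective _ (Fin.castSucc_injective n)
  exact hψ (hinj (by rw [h3, map_zero]))

omit h0 in
lemma poincareT_C (c : ℂ) : poincareT n 0 (C c) = C c := by
  simp [poincareT, homogeneousComponent_zero, algebraMap_eq]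

include h0 in
lemma Tfwd_monomial_C (c : ℂ) (k s' : ℕ) :
    Tfwd n s' (X 0 ^ k * C c) = if k ≤ s' then C c * X (Fin.last n) ^ (s' - k) else 0 := by
  have hcomp : ∀ j : ℕ, homogeneousComponent j (X (0 : Fin (n+1)) ^ k * C c)
      = if j = k then X 0 ^ k * C c else 0 := by
    intro j
    rw [mul_comm, homogeneousComponent_C_mul]
    rw [homogeneousComponent_of_mem (mem_homogeneousSubmodule _ _ |>.2 (isHomogeneous_X_pow 0 k))]
    split_ifs <;> simp [mul_comm]
  have haev : aeval (wT n) (X (0 : Fin (n+1)) ^ k * C c) = C c := by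
    rw [map_mul, map_pow, aeval_X]
    have : wT n 0 = 1 := by simp [wT, h0]
    rw [this, one_pow, one_mul]
    simp [algebraMap_eq]
  rw [Tfwd]
  rw [Finset.sum_congr rfl (fun j _ => by rw [hcomp j])]
  have : ∀ j ∈ Finset.range (s'+1),
      aeval (wT n) (if j = k then X (0 : Fin (n+1)) ^ k * C c else 0) * X (Fin.last n) ^ (s' - j)
      = if j = k then C c * X (Fin.last n) ^ (s' - k) else 0 := by
    intro j _
    split_ifs with hjk
    · subst hjk; rw [haev]
    · simp
  rw [Finset.sum_congr rfl this, Finset.sum_ite_eq' (Finset.range (s'+1)) k]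
  simp only [Finset.mem_range]
  split_ifs with h1 h2 h2 <;> first | rfl | omega

def Eq1 (n : ℕ) : Rn n ≃ₐ[ℂ] Polynomial (An n) :=
  (renameEquiv ℂ (finSuccEquiv' (Fin.last n))).trans (optionEquivLeft ℂ (Fin n))

lemma Eq1_rename (a : An n) : Eq1 n (rename Fin.castSucc a) = Polynomial.C a := by
  have key : ((Eq1 n).toAlgHom.comp
      ((rename (Fin.castSucc : Fin n → Fin (n+1))) : An n →ₐ[ℂ] Rn n))
      = (Polynomial.CAlgHom : An n →ₐ[ℂ] Polynomial (An n)) := by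
    apply algHom_ext
    intro i
    simp [Eq1, renameEquiv_apply, rename_rename, Function.comp,
      finSuccEquiv'_last_apply_castSucc, optionEquivLeft_X_some, Polynomial.CAlgHom]
  exact congrFun (congrArg (fun (f : An n →ₐ[ℂ] Polynomial (An n)) => (f : An n → Polynomial (An n))) key) a

lemma Eq1_Xlast : Eq1 n (X (Fin.last n)) = Polynomial.X := by
  simp [Eq1, renameEquiv_apply, finSuccEquiv'_at, optionEquivLeft_X_none]

lemma primeXlast : Prime (X (Fin.last n) : Rn n) := by
  rw [← MulEquiv.prime_iff ((Eq1 n).toRingEquiv.toMulEquiv)]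
  have : (Eq1 n) (X (Fin.last n)) = Polynomial.X := Eq1_Xlast
  show Prime ((Eq1 n) (X (Fin.last n)))
  rw [this]
  exact Polynomial.prime_X

lemma primeX0 : Prime (X (0 : Fin (n+1)) : Rn n) := by
  rw [← MulEquiv.prime_iff ((MvPolynomial.finSuccEquiv ℂ n).toRingEquiv.toMulEquiv)]
  show Prime ((MvPolynomial.finSuccEquiv ℂ n) (X 0))
  rw [finSuccEquiv_X_zero]
  exact Polynomial.prime_X

lemma isUnit_eq_C {m : ℕ} (p : MvPolynomial (Fin m) ℂ) (hp : IsUnit p) :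
    ∃ c : ℂ, p = C c := by
  induction m with
  | zero => exact ⟨_, (C_surjective (Fin 0) p).choose_spec.symm⟩
  | succ m ih =>
    have h1 : IsUnit ((MvPolynomial.finSuccEquiv ℂ m) p) := hp.map _
    obtain ⟨r, hru, hrp⟩ := Polynomial.isUnit_iff.mp h1
    obtain ⟨c, rfl⟩ := ih r hru
    refine ⟨c, ?_⟩
    have : (MvPolynomial.finSuccEquiv ℂ m) (C c) = Polynomial.C (C c) := by
      simp [MvPolynomial.finSuccEquiv_apply]  -- maybe finSuccEquiv_C?
    apply (MvPolynomial.finSuccEquiv ℂ m).injective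
    rw [this, hrp]

end PoincareAux

open PoincareAux

/-- If `ψ_1, ψ_2` are relatively prime polynomials of degrees `r_1, r_2` whose top
homogeneous parts both vanish at `e_1`, then the Poincaré transforms `ψ_1*_{e_1}` and
`ψ_2*_{e_1}` are relatively prime. -/
theorem stmt6 (n r₁ r₂ : ℕ) (ψ₁ ψ₂ : MvPolynomial (Fin n) ℂ)
    (hrp : IsRelPrime ψ₁ ψ₂)
    (hdeg1 : ψ₁.totalDegree = r₁) (hdeg2 : ψ₂.totalDegree = r₂)
    (htop1 : eval (e1vec n) (homogeneousComponent r₁ ψ₁) = 0)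
    (htop2 : eval (e1vec n) (homogeneousComponent r₂ ψ₂) = 0) :
    IsRelPrime (poincareT n r₁ ψ₁) (poincareT n r₂ ψ₂) := by
  clear htop1 htop2
  cases n with
  | zero =>
    intro d hd1 hd2
    obtain ⟨c₁, rfl⟩ := C_surjective (Fin 0) ψ₁
    obtain ⟨c₂, rfl⟩ := C_surjective (Fin 0) ψ₂
    have hr₁ : r₁ = 0 := by rw [← hdeg1, totalDegree_C]
    have hr₂ : r₂ = 0 := by rw [← hdeg2, totalDegree_C]
    subst hr₁; subst hr₂
    rw [poincareT_C] at hd1 hd2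
    by_cases h1 : c₁ = 0
    · subst h1
      have hu : IsUnit (C c₂ : MvPolynomial (Fin 0) ℂ) :=
        hrp (by rw [map_zero]; exact dvd_zero _) dvd_rfl
      have hc2 : c₂ ≠ 0 := by
        rintro rfl
        rw [map_zero] at hu
        exact not_isUnit_zero hu
      exact isUnit_of_dvd_unit hd2 ((isUnit_iff_ne_zero.2 hc2).map C)
    · exact isUnit_of_dvd_unit hd1 ((isUnit_iff_ne_zero.2 h1).map C)
  | succ m =>
    have h0 : (0 : Fin (m+1+1)) ≠ Fin.last (m+1) := by
      intro hcon
      have := congrArg Fin.val hcon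
      simp [Fin.last] at this
    intro d hd1 hd2
    by_contra hdu
    by_cases hz1 : ψ₁ = 0
    · have hu2 : IsUnit ψ₂ := hrp (by rw [hz1]; exact dvd_zero _) dvd_rfl
      obtain ⟨c, rfl⟩ := isUnit_eq_C ψ₂ hu2
      have hc : c ≠ 0 := by
        rintro rfl
        rw [map_zero] at hu2
        exact not_isUnit_zero hu2
      have hr2 : r₂ = 0 := by rw [← hdeg2, totalDegree_C]
      subst hr2
      rw [poincareT_C] at hd2
      exact hdu (isUnit_of_dvd_unit hd2 ((isUnit_iff_ne_zero.2 hc).map C))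
    by_cases hz2 : ψ₂ = 0
    · have hu1 : IsUnit ψ₁ := hrp dvd_rfl (by rw [hz2]; exact dvd_zero _)
      obtain ⟨c, rfl⟩ := isUnit_eq_C ψ₁ hu1
      have hc : c ≠ 0 := by
        rintro rfl
        rw [map_zero] at hu1
        exact not_isUnit_zero hu1
      have hr1 : r₁ = 0 := by rw [← hdeg1, totalDegree_C]
      subst hr1
      rw [poincareT_C] at hd1
      exact hdu (isUnit_of_dvd_unit hd1 ((isUnit_iff_ne_zero.2 hc).map C))
    -- both nonzero
    have hP1ne : poincareT (m+1) r₁ ψ₁ ≠ 0 := poincareT_ne_zero h0 hz1 hdeg1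
    have hdne : d ≠ 0 := by
      rintro rfl
      exact hP1ne (zero_dvd_iff.mp hd1)
    obtain ⟨q, hqirr, hqd⟩ := WfDvdMonoid.exists_irreducible_factor hdu hdne
    have hq : Prime q := (UniqueFactorizationMonoid.irreducible_iff_prime).mp hqirr
    have hq1 : q ∣ poincareT (m+1) r₁ ψ₁ := hqd.trans hd1
    have hq2 : q ∣ poincareT (m+1) r₂ ψ₂ := hqd.trans hd2
    have hXl1 : ¬ (X (Fin.last (m+1)) ∣ poincareT (m+1) r₁ ψ₁) := lemX hz1 hdeg1
    have hqXl : ¬ (q ∣ X (Fin.last (m+1))) := by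
      intro hdvd
      have hass : Associated q (X (Fin.last (m+1))) :=
        hqirr.associated_of_dvd primeXlast.irreducible hdvd
      exact hXl1 (hass.symm.dvd.trans hq1)
    set s := q.totalDegree with hsdef
    set Q := Srev (m+1) s q with hQdef
    set s' := max s Q.totalDegree with hs'def
    have hC := propC h0 q (le_refl s)
    have hQne : Q ≠ 0 := by
      intro h
      have hT0 : Tfwd (m+1) s' Q = 0 := by
        rw [h]
        simp [Tfwd]
      rw [hC] at hT0
      rcases mul_eq_zero.mp hT0 with h' | h'
      · exact pow_ne_zero _ (X_ne_zero _) h'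
      · exact hq.ne_zero h'
    obtain ⟨k, qhat, hndvd, hfac⟩ := WfDvdMonoid.max_power_factor hQne primeX0.irreducible
    by_cases hunit : IsUnit qhat
    · obtain ⟨c, rfl⟩ := isUnit_eq_C qhat hunit
      have hc0 : c ≠ 0 := by
        rintro rfl
        rw [map_zero, mul_zero] at hfac
        exact hQne hfac
      have hTQ := Tfwd_monomial_C h0 c k s'
      rw [← hfac, hC] at hTQ
      by_cases hks : k ≤ s'
      · rw [if_pos hks] at hTQ
        have hqdvd : q ∣ C c * X (Fin.last (m+1)) ^ (s' - k) := by
          rw [← hTQ]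
          exact dvd_mul_left q _
        rcases hq.2.2 _ _ hqdvd with h' | h'
        · exact hqirr.not_isUnit (isUnit_of_dvd_unit h' ((isUnit_iff_ne_zero.2 hc0).map (C : ℂ →+* MvPolynomial (Fin (m+1+1)) ℂ)))
        · exact hqXl (hq.dvd_of_dvd_pow h')
      · rw [if_neg hks] at hTQ
        exact (mul_ne_zero (pow_ne_zero _ (X_ne_zero _)) hq.ne_zero) hTQ
    · have hqhne : qhat ≠ 0 := by
        rintro rfl
        rw [mul_zero] at hfac
        exact hQne hfac
      obtain ⟨p, hpirr, hpd⟩ := WfDvdMonoid.exists_irreducible_factor hunit hqhne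
      have hp : Prime p := UniqueFactorizationMonoid.irreducible_iff_prime.mp hpirr
      have hpX0 : ¬ p ∣ X (0 : Fin (m+1+1)) := by
        intro hdvd
        have hass : Associated p (X 0) := hpirr.associated_of_dvd primeX0.irreducible hdvd
        exact hndvd (hass.symm.dvd.trans hpd)
      have hpQ : p ∣ Q := by
        rw [hfac]
        exact hpd.mul_left _
      have key : ∀ (r : ℕ) (ψ : MvPolynomial (Fin (m+1)) ℂ), ψ.totalDegree = r →
          q ∣ poincareT (m+1) r ψ → p ∣ rename Fin.castSucc ψ := by
        intro r ψ hr hqP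
        obtain ⟨g, hg⟩ := hqP
        have e1 := tau_poincareT h0 ψ hr
        have e2 := tau_Srev h0 q (le_refl s)
        have e3 := tau_Srev h0 g (le_refl g.totalDegree)
        have epoly : rename Fin.castSucc ψ * X 0 ^ (s + g.totalDegree)
            = Q * Srev (m+1) g.totalDegree g * X 0 ^ r := by
          apply em_inj
          rw [map_mul, map_mul, map_mul, map_pow, map_pow]
          rw [← e1, ← e2, ← e3, hg, map_mul, pow_add]
          ring
        have hpdvd : p ∣ rename Fin.castSucc ψ * X 0 ^ (s + g.totalDegree) := by
          rw [epoly]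
          exact ((hpQ.mul_right _).mul_right _)
        rcases hp.2.2 _ _ hpdvd with h' | h'
        · exact h'
        · exact absurd (hp.dvd_of_dvd_pow h') hpX0
      have k1 := key r₁ ψ₁ hdeg1 hq1
      have k2 := key r₂ ψ₂ hdeg2 hq2
      have hd1' : Eq1 (m+1) p ∣ Polynomial.C ψ₁ := by
        rw [← Eq1_rename]
        exact map_dvd _ k1
      have hd2' : Eq1 (m+1) p ∣ Polynomial.C ψ₂ := by
        rw [← Eq1_rename]
        exact map_dvd _ k2
      have hCne : (Polynomial.C ψ₁ : Polynomial (MvPolynomial (Fin (m+1)) ℂ)) ≠ 0 := by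
        rw [Ne, Polynomial.C_eq_zero]
        exact hz1
      have hdeg0 : (Eq1 (m+1) p).natDegree = 0 := by
        have h5 := Polynomial.natDegree_le_of_dvd hd1' hCne
        simpa [Polynomial.natDegree_C] using h5
      obtain ⟨a, ha⟩ := Polynomial.natDegree_eq_zero.mp hdeg0
      have hadvd : ∀ ψ : MvPolynomial (Fin (m+1)) ℂ,
          Eq1 (m+1) p ∣ Polynomial.C ψ → a ∣ ψ := by
        intro ψ hdvd
        obtain ⟨h, hh⟩ := hdvd
        refine ⟨h.coeff 0, ?_⟩
        have h6 := congrArg (fun f => Polynomial.coeff f 0) hh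
        simpa [← ha, Polynomial.coeff_C_mul] using h6
      have hua : IsUnit a := hrp (hadvd _ hd1') (hadvd _ hd2')
      have hEp : IsUnit (Eq1 (m+1) p) := by
        rw [← ha]
        exact hua.map Polynomial.C
      apply hpirr.not_isUnit
      have h7 := hEp.map (Eq1 (m+1)).symm
      simpa using h7
end
end

section
/- Let f be a polynomial vector field on ℂ^n of degree m with top homogeneous part p = f^{(m)}, and suppose p(e_1) = γ·e_1 for some γ ∈ ℂ, where e_1 = (1,0,…,0). Then e_1 is an eigenvector of the Jacobian Dp(e_1) with eigenvalue m·γ, and if the characteristic polynomial of Dp(e_1) factors as (t − mγ)·Π_{i=2}^n (t − β_i), then the characteristic polynomial of the Jacobian of the Poincaré transform f*_{e_1} at the stationary point 0 equals (t + γ)·Π_{i=2}^n (t − (β_i − γ)). -/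
open MvPolynomial

noncomputable section

/-- `f = f^{(0)} + ⋯ + f^{(m)}` is a polynomial vector field of degree `m`
(each component has degree at most `m` and the top part `f^{(m)}` is nonzero). -/
def IsDegVF (n m : ℕ) (f : Fin n → MvPolynomial (Fin n) ℂ) : Prop :=
  (∀ k, (f k).totalDegree ≤ m) ∧ ∃ k, homogeneousComponent m (f k) ≠ 0

/-- The top-degree homogeneous part `f^{(m)}` of `f`. -/
def topPart (n m : ℕ) (f : Fin n → MvPolynomial (Fin n) ℂ) : Fin n → MvPolynomial (Fin n) ℂ :=
  fun k => homogeneousComponent m (f k)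

/-- `ψ` is a semi-invariant of `f`: `ψ` nonconstant and `X_f(ψ) = λ·ψ` for a polynomial `λ`. -/
def IsSemiInv (n : ℕ) (f : Fin n → MvPolynomial (Fin n) ℂ) (ψ : MvPolynomial (Fin n) ℂ) : Prop :=
  ψ.totalDegree ≠ 0 ∧ ∃ lam, lieD n f ψ = lam * ψ

/-- The homogenization `g_k(x_1,…,x_{n+1}) = Σ_{j=0}^m f_k^{(j)}(x_1,…,x_n)·x_{n+1}^{m-j}`. -/
def homogenize (n m : ℕ) (f : Fin n → MvPolynomial (Fin n) ℂ) (k : Fin n) :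
    MvPolynomial (Fin (n + 1)) ℂ :=
  ∑ j ∈ Finset.range (m + 1),
    rename Fin.castSucc (homogeneousComponent j (f k)) * X (Fin.last n) ^ (m - j)

/-- Substitute `x_1 = 1`. -/
def setFirstOne (n : ℕ) (g : MvPolynomial (Fin (n + 1)) ℂ) : MvPolynomial (Fin (n + 1)) ℂ :=
  aeval (fun i : Fin (n + 1) => if (i : ℕ) = 0 then 1 else X i) g

/-- The Poincaré transform `f*_{e_1}` of `f` (a vector field in the variables
`x_2,…,x_{n+1}`): the component indexed by `a : Fin n` corresponds to the variable with
index `a.succ`, and equals `-g_1(1,x_2,…,x_{n+1})·x_{a.succ} + g_{a+1}(1,x_2,…,x_{n+1})`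
for the non-final components and `-g_1(1,x_2,…,x_{n+1})·x_{n+1}` for the final one. -/
def ptVF (n m : ℕ) [NeZero n] (f : Fin n → MvPolynomial (Fin n) ℂ) (a : Fin n) :
    MvPolynomial (Fin (n + 1)) ℂ :=
  -(setFirstOne n (homogenize n m f 0)) * X a.succ +
    if h : (a : ℕ) + 1 < n then setFirstOne n (homogenize n m f ⟨(a : ℕ) + 1, h⟩) else 0

/-- The Jacobian matrix `D f*_{e_1}(0)` of the Poincaré transform at the origin. -/
def ptJac (n m : ℕ) [NeZero n] (f : Fin n → MvPolynomial (Fin n) ℂ) :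
    Matrix (Fin n) (Fin n) ℂ :=
  Matrix.of fun a b => eval (0 : Fin (n + 1) → ℂ) (pderiv b.succ (ptVF n m f a))

/-- The conjugated vector field `T ∘ f ∘ T⁻¹`. -/
def conjVF (n : ℕ) (T : Matrix (Fin n) (Fin n) ℂ) (f : Fin n → MvPolynomial (Fin n) ℂ)
    (k : Fin n) : MvPolynomial (Fin n) ℂ :=
  ∑ j, T k j • aeval (fun i : Fin n => ∑ l, T⁻¹ i l • (X l : MvPolynomial (Fin n) ℂ)) (f j)

/-- Condition 1: `λ_1,…,λ_n` are linearly independent over `ℚ`. -/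
def Cond1 (n : ℕ) (lam : Fin n → ℂ) : Prop :=
  LinearIndependent ℚ lam

/-- Condition 2: `dim_ℚ (ℚλ_1 + ⋯ + ℚλ_n) = n - 1` and there are positive integers `m_i`
with `Σ m_i λ_i = 0`. -/
def Cond2 (n : ℕ) (lam : Fin n → ℂ) : Prop :=
  Module.finrank ℚ (Submodule.span ℚ (Set.range lam)) = n - 1 ∧
    ∃ μ : Fin n → ℕ, (∀ i, 0 < μ i) ∧ ∑ i, (μ i : ℂ) * lam i = 0

/-- `lam` enumerates the eigenvalues of `M` with multiplicity. -/
def HasEigenvalues (n : ℕ) (M : Matrix (Fin n) (Fin n) ℂ) (lam : Fin n → ℂ) : Prop :=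
  M.charpoly = ∏ i, (Polynomial.X - Polynomial.C (lam i))

/-- Property E: for every stationary point at infinity, i.e. every direction `v ≠ 0` with
`f^{(m)}(v) ∈ ℂ·v`, the eigenvalues (with multiplicity) of the Jacobian `D f*_v(0)` of the
Poincaré transform `f*_v = (T∘f∘T⁻¹)*_{e_1}` (for any invertible `T` with `Tv = e_1`)
satisfy condition 1 or condition 2. -/
def PropertyE (n m : ℕ) [NeZero n] (f : Fin n → MvPolynomial (Fin n) ℂ) : Prop :=
  ∀ v : Fin n → ℂ, v ≠ 0 →
    (∃ c : ℂ, (fun k => eval v (topPart n m f k)) = c • v) →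
    ∀ T : Matrix (Fin n) (Fin n) ℂ, IsUnit T.det → T.mulVec v = e1vec n →
      ∃ lam : Fin n → ℂ,
        HasEigenvalues n (ptJac n m (conjVF n T f)) lam ∧ (Cond1 n lam ∨ Cond2 n lam)

/-- The vanishing ideal of a subset `Y ⊆ ℂ^n`. -/
def vanIdeal (n : ℕ) (Y : Set (Fin n → ℂ)) : Ideal (MvPolynomial (Fin n) ℂ) where
  carrier := {g | ∀ x ∈ Y, eval x g = 0}
  add_mem' := by
    intro a b ha hb x hx
    simp only [Set.mem_setOf_eq, map_add] at *
    rw [ha x hx, hb x hx, add_zero]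
  zero_mem' := by
    intro x _
    simp
  smul_mem' := by
    intro c g hg x hx
    simp only [Set.mem_setOf_eq, smul_eq_mul, map_mul] at *
    rw [hg x hx, mul_zero]

/-- Property S: every proper homogeneous (conical) algebraic subvariety `Y ⊊ ℂ^n` of
dimension `≥ 1` that is invariant under `f^{(m)}` contains a line `ℂ·v` with `v ≠ 0` and
`f^{(m)}(v) ∈ ℂ·v`. -/
def PropertyS (n m : ℕ) (f : Fin n → MvPolynomial (Fin n) ℂ) : Prop :=
  ∀ Y : Set (Fin n → ℂ),
    (∀ c : ℂ, ∀ x ∈ Y, c • x ∈ Y) →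
    Y = {x | ∀ g ∈ vanIdeal n Y, eval x g = 0} →
    Y ≠ Set.univ →
    1 ≤ ringKrullDim (MvPolynomial (Fin n) ℂ ⧸ vanIdeal n Y) →
    (∀ g ∈ vanIdeal n Y, lieD n (topPart n m f) g ∈ vanIdeal n Y) →
    ∃ v : Fin n → ℂ, v ≠ 0 ∧ v ∈ Y ∧
      ∃ c : ℂ, (fun k => eval v (topPart n m f k)) = c • v

/-! ### Auxiliary lemmas -/

/-- Euler's identity for homogeneous polynomials. -/
lemma stmt7_euler_id {N : ℕ} (m : ℕ) (p : MvPolynomial (Fin N) ℂ) (hp : p.IsHomogeneous m) :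
    ∑ i, X i * pderiv i p = C (m : ℂ) * p := by
  conv_lhs => rw [p.as_sum]
  conv_rhs => rw [p.as_sum]
  simp only [map_sum, Finset.mul_sum]
  rw [Finset.sum_comm]
  refine Finset.sum_congr rfl fun d hd => ?_
  have hdeg : ∑ i : Fin N, d i = m := by
    have h1 := hp (mem_support_iff.mp hd)
    rw [← h1]
    simp only [Finsupp.weight_apply, Finsupp.sum, smul_eq_mul, Pi.one_apply, mul_one]
    exact (Finset.sum_subset (Finset.subset_univ d.support)
      (fun x _ hx => Finsupp.notMem_support_iff.mp hx)).symm
  calc ∑ i, X i * pderiv i (monomial d (coeff d p))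
      = ∑ i : Fin N, monomial d (coeff d p * d i) := by
        refine Finset.sum_congr rfl fun i _ => ?_
        rw [pderiv_monomial]
        by_cases h : d i = 0
        · simp [h]
        · rw [X, monomial_mul, one_mul]
          have hs : (Finsupp.single i 1 + (d - Finsupp.single i 1)) = d := by
            ext j
            by_cases hj : j = i
            · subst hj; simp [Finsupp.single_apply]; omega
            · simp [Finsupp.single_apply, Ne.symm hj]
          rw [hs]
    _ = C (m:ℂ) * monomial d (coeff d p) := by
        rw [← map_sum (monomial d), ← Finset.mul_sum, C_mul_monomial, ← Nat.cast_sum, hdeg,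
          mul_comm]

def Evec (n : ℕ) : Fin (n+1) → ℂ := fun i => if (i:ℕ) = 0 then 1 else 0

lemma Evec_comp_castSucc (n : ℕ) : (Evec n) ∘ Fin.castSucc = e1vec n := by
  funext i; simp [Evec, e1vec]

lemma Evec_last (n : ℕ) [NeZero n] : Evec n (Fin.last n) = 0 := by
  simp [Evec, Fin.last, NeZero.ne n]

lemma pderiv_setFirstOne (n : ℕ) (j : Fin (n+1)) (hj : (j:ℕ) ≠ 0)
    (g : MvPolynomial (Fin (n+1)) ℂ) :
    pderiv j (setFirstOne n g) = setFirstOne n (pderiv j g) := by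
  unfold setFirstOne
  induction g using MvPolynomial.induction_on with
  | C a => simp
  | add p q hp hq => simp only [map_add, hp, hq]
  | mul_X p i hp =>
      rw [map_mul, aeval_X, pderiv_mul, hp, pderiv_mul, map_add, map_mul, aeval_X, map_mul]
      congr 1
      by_cases hi : (i:ℕ) = 0
      · have : j ≠ i := fun h => hj (h ▸ hi)
        simp [hi, pderiv_X, Pi.single_apply, this]
      · by_cases hij : i = j
        · subst hij; simp [hi, pderiv_X]
        · simp [hi, pderiv_X, Pi.single_apply, Ne.symm hij, hij]

lemma eval_zero_setFirstOne (n : ℕ) (g : MvPolynomial (Fin (n+1)) ℂ) :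
    eval (0 : Fin (n+1) → ℂ) (setFirstOne n g) = eval (Evec n) g := by
  unfold setFirstOne Evec
  induction g using MvPolynomial.induction_on with
  | C a => simp
  | add p q hp hq => simp only [map_add, hp, hq]
  | mul_X p i hp =>
      rw [map_mul, aeval_X, map_mul, hp, map_mul, eval_X]
      congr 1
      by_cases hi : (i:ℕ) = 0 <;> simp [hi]

lemma eval_E_homogenize (n m : ℕ) [NeZero n] (f : Fin n → MvPolynomial (Fin n) ℂ) (k : Fin n) :
    eval (Evec n) (homogenize n m f k) = eval (e1vec n) (topPart n m f k) := by
  unfold homogenize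
  rw [map_sum, Finset.sum_eq_single m]
  · rw [map_mul, map_pow, eval_X, Evec_last, Nat.sub_self, pow_zero, mul_one, eval_rename,
      Evec_comp_castSucc]
    rfl
  · intro j hj hjm
    rw [map_mul, map_pow, eval_X, Evec_last, zero_pow, mul_zero]
    have := Finset.mem_range.mp hj
    omega
  · intro h; exact absurd (Finset.self_mem_range_succ m) h

lemma eval_E_pderiv_homogenize (n m : ℕ) [NeZero n] (f : Fin n → MvPolynomial (Fin n) ℂ)
    (k : Fin n) (i : Fin n) :
    eval (Evec n) (pderiv i.castSucc (homogenize n m f k)) =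
      eval (e1vec n) (pderiv i (topPart n m f k)) := by
  unfold homogenize
  rw [map_sum, map_sum, Finset.sum_eq_single m]
  · rw [Nat.sub_self, pow_zero, mul_one, pderiv_rename (Fin.castSucc_injective n),
      eval_rename, Evec_comp_castSucc]
    rfl
  · intro j hj hjm
    have hmj : m - j ≠ 0 := by have := Finset.mem_range.mp hj; omega
    rw [pderiv_mul, pderiv_rename (Fin.castSucc_injective n), pderiv_pow, pderiv_X,
      Pi.single_eq_of_ne (Fin.castSucc_lt_last i).ne']
    simp [zero_pow hmj, Evec_last, hmj]
  · intro h; exact absurd (Finset.self_mem_range_succ m) h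

lemma eval0_pderiv_sfo (n m : ℕ) [NeZero n] (f : Fin n → MvPolynomial (Fin n) ℂ)
    (k : Fin n) (i : Fin n) (hi : (i:ℕ) ≠ 0) :
    eval (0 : Fin (n+1) → ℂ) (pderiv i.castSucc (setFirstOne n (homogenize n m f k))) =
      eval (e1vec n) (pderiv i (topPart n m f k)) := by
  rw [pderiv_setFirstOne n i.castSucc (by simpa using hi), eval_zero_setFirstOne,
    eval_E_pderiv_homogenize]

lemma ptJac_entry (n m : ℕ) [NeZero n] (f : Fin n → MvPolynomial (Fin n) ℂ) (a b : Fin n) :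
    ptJac n m f a b =
      -(eval (0 : Fin (n+1) → ℂ) (setFirstOne n (homogenize n m f 0))) *
          (if a = b then 1 else 0) +
        (if h : (a : ℕ) + 1 < n then
            eval (0 : Fin (n+1) → ℂ)
              (pderiv b.succ (setFirstOne n (homogenize n m f ⟨(a : ℕ) + 1, h⟩)))
          else 0) := by
  unfold ptJac ptVF
  rw [Matrix.of_apply, map_add, map_add, neg_mul, map_neg, pderiv_mul, map_neg, map_add,
    map_mul, map_mul, eval_X]
  have h0 : (0 : Fin (n+1) → ℂ) a.succ = 0 := rfl
  rw [h0, mul_zero, zero_add]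
  congr 1
  · rw [neg_mul, pderiv_X]
    by_cases hab : a = b
    · subst hab; simp
    · rw [Pi.single_eq_of_ne (fun h => hab (Fin.succ_inj.mp h)), if_neg hab, map_zero]
  · by_cases h : (a : ℕ) + 1 < n <;> simp [h]

lemma charmatrix_submatrix_inj {N M : ℕ} (A : Matrix (Fin N) (Fin N) ℂ)
    (g : Fin M → Fin N) (hg : Function.Injective g) :
    (Matrix.charmatrix A).submatrix g g = Matrix.charmatrix (A.submatrix g g) := by
  ext a b
  by_cases hab : a = b
  · subst hab
    rw [Matrix.submatrix_apply, Matrix.charmatrix_apply_eq, Matrix.charmatrix_apply_eq,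
      Matrix.submatrix_apply]
  · rw [Matrix.submatrix_apply, Matrix.charmatrix_apply_ne _ _ _ (fun h => hab (hg h)),
      Matrix.charmatrix_apply_ne _ _ _ hab, Matrix.submatrix_apply]

lemma charpoly_lastRow {N : ℕ} (M : Matrix (Fin (N+1)) (Fin (N+1)) ℂ)
    (h : ∀ b, b ≠ Fin.last N → M (Fin.last N) b = 0) :
    M.charpoly = (Polynomial.X - Polynomial.C (M (Fin.last N) (Fin.last N))) *
      (M.submatrix Fin.castSucc Fin.castSucc).charpoly := by
  rw [Matrix.charpoly, Matrix.det_succ_row _ (Fin.last N), Finset.sum_eq_single (Fin.last N)]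
  · rw [Matrix.charmatrix_apply_eq, Fin.succAbove_last,
      charmatrix_submatrix_inj M Fin.castSucc (Fin.castSucc_injective N)]
    rw [Even.neg_one_pow ⟨(Fin.last N : ℕ), rfl⟩, one_mul]
    rfl
  · intro b _ hb
    rw [Matrix.charmatrix_apply_ne _ _ _ (Ne.symm hb), h b hb, map_zero, neg_zero, mul_zero,
      zero_mul]
  · intro hmem; exact absurd (Finset.mem_univ _) hmem

lemma charpoly_firstCol {N : ℕ} (M : Matrix (Fin (N+1)) (Fin (N+1)) ℂ)
    (h : ∀ a, a ≠ 0 → M a 0 = 0) :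
    M.charpoly = (Polynomial.X - Polynomial.C (M 0 0)) *
      (M.submatrix Fin.succ Fin.succ).charpoly := by
  rw [Matrix.charpoly, Matrix.det_succ_column_zero, Finset.sum_eq_single (0 : Fin (N+1))]
  · rw [Matrix.charmatrix_apply_eq]
    have hs : (0 : Fin (N+1)).succAbove = Fin.succ := by
      funext i; exact Fin.zero_succAbove i
    rw [hs, charmatrix_submatrix_inj M Fin.succ (Fin.succ_injective N)]
    norm_num
    left
    rfl
  · intro a _ ha
    rw [Matrix.charmatrix_apply_ne _ _ _ ha, h a ha, map_zero, neg_zero, mul_zero, zero_mul]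
  · intro hmem; exact absurd (Finset.mem_univ _) hmem

lemma charpoly_shift {N : ℕ} (A : Matrix (Fin N) (Fin N) ℂ) (γ : ℂ) (β : Fin N → ℂ)
    (hA : A.charpoly = ∏ i, (Polynomial.X - Polynomial.C (β i))) :
    (A - γ • 1).charpoly = ∏ i, (Polynomial.X - Polynomial.C (β i - γ)) := by
  set ψ : Polynomial ℂ →+* Polynomial ℂ :=
    Polynomial.eval₂RingHom (Polynomial.C : ℂ →+* Polynomial ℂ)
      (Polynomial.X + Polynomial.C γ) with hψ
  have hm : Matrix.charmatrix (A - γ • 1) = (Matrix.charmatrix A).map ψ := by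
    ext a b
    by_cases hab : a = b
    · subst hab
      rw [Matrix.charmatrix_apply_eq, Matrix.map_apply, Matrix.charmatrix_apply_eq]
      simp [hψ, Matrix.sub_apply, Matrix.smul_apply, Matrix.one_apply_eq, Polynomial.C_sub]
      ring
    · rw [Matrix.charmatrix_apply_ne _ _ _ hab, Matrix.map_apply,
        Matrix.charmatrix_apply_ne _ _ _ hab]
      simp [hψ, Matrix.sub_apply, Matrix.smul_apply, Matrix.one_apply_ne hab]
  rw [Matrix.charpoly, hm, ← RingHom.mapMatrix_apply, ← RingHom.map_det, ← Matrix.charpoly,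
    hA, map_prod]
  refine Finset.prod_congr rfl fun i _ => ?_
  simp [hψ, Polynomial.C_sub]
  ring


/-- Let `p = f^{(m)}` be the top part of `f` and suppose `p(e_1) = γ·e_1`. Then `e_1` is an
eigenvector of `Dp(e_1)` with eigenvalue `m·γ`, and if the characteristic polynomial of
`Dp(e_1)` factors as `(t - mγ)·Π_{i=2}^n (t - β_i)`, then the characteristic polynomial of
the Jacobian of the Poincaré transform `f*_{e_1}` at the stationary point `0` equals
`(t + γ)·Π_{i=2}^n (t - (β_i - γ))`. -/
theorem stmt7 (n m : ℕ) [NeZero n] (f : Fin n → MvPolynomial (Fin n) ℂ)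
    (hf : IsDegVF n m f)
    (γ : ℂ)
    (hstat : (fun k => eval (e1vec n) (topPart n m f k)) = γ • e1vec n) :
    (Matrix.of fun a b : Fin n =>
        eval (e1vec n) (pderiv b (topPart n m f a))).mulVec (e1vec n) =
      ((m : ℂ) * γ) • e1vec n ∧
    ∀ β : Fin (n - 1) → ℂ,
      (Matrix.of fun a b : Fin n => eval (e1vec n) (pderiv b (topPart n m f a))).charpoly =
        (Polynomial.X - Polynomial.C ((m : ℂ) * γ)) *
          ∏ i, (Polynomial.X - Polynomial.C (β i)) →
      (ptJac n m f).charpoly =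
        (Polynomial.X + Polynomial.C γ) *
          ∏ i : Fin (n - 1), (Polynomial.X - Polynomial.C (β i - γ)) := by
  have e1_at : ∀ i : Fin n, e1vec n i = if i = 0 then 1 else 0 := by
    intro i
    show (if (i : ℕ) = 0 then (1 : ℂ) else 0) = _
    by_cases h : i = 0
    · subst h; rw [if_pos rfl, if_pos (show ((0 : Fin n) : ℕ) = 0 from rfl)]
    · rw [if_neg h, if_neg (fun h' => h (Fin.ext (h'.trans (show ((0 : Fin n) : ℕ) = 0 from rfl).symm)))]
  have hstat' : ∀ k, eval (e1vec n) (topPart n m f k) = γ * e1vec n k := by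
    intro k
    have := congrFun hstat k
    simpa using this
  have hkey : ∀ a, eval (e1vec n) (pderiv (0 : Fin n) (topPart n m f a)) =
      (m:ℂ) * γ * e1vec n a := by
    intro a
    have h := stmt7_euler_id m (topPart n m f a)
      (homogeneousComponent_isHomogeneous (n := m) (φ := f a))
    have h2 := congrArg (eval (e1vec n)) h
    rw [map_sum, map_mul, eval_C] at h2
    rw [Finset.sum_eq_single (0 : Fin n)] at h2
    · rw [map_mul, eval_X, e1_at, if_pos rfl, one_mul] at h2
      rw [h2, hstat' a]
      ring
    · intro b _ hb
      rw [map_mul, eval_X, e1_at, if_neg hb, zero_mul]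
    · intro hmem; exact absurd (Finset.mem_univ _) hmem
  constructor
  · funext a
    have hmv : ((Matrix.of fun a b : Fin n =>
        eval (e1vec n) (pderiv b (topPart n m f a))).mulVec (e1vec n)) a =
        ∑ b, eval (e1vec n) (pderiv b (topPart n m f a)) * e1vec n b := rfl
    rw [hmv, Finset.sum_eq_single (0 : Fin n)]
    · rw [e1_at, if_pos rfl, mul_one, hkey a]
      simp
    · intro b _ hb
      rw [e1_at, if_neg hb, mul_zero]
    · intro hmem; exact absurd (Finset.mem_univ _) hmem
  · intro β hchar
    have hG0 : eval (0 : Fin (n+1) → ℂ) (setFirstOne n (homogenize n m f 0)) = γ := by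
      rw [eval_zero_setFirstOne, eval_E_homogenize, hstat' 0, e1_at, if_pos rfl, mul_one]
    obtain ⟨N, rfl⟩ := Nat.exists_eq_succ_of_ne_zero (NeZero.ne n)
    set n := N + 1 with hn
    set J : Matrix (Fin n) (Fin n) ℂ :=
      Matrix.of fun a b : Fin n => eval (e1vec n) (pderiv b (topPart n m f a)) with hJdef
    have hJ0 : ∀ a, J a 0 = (m:ℂ) * γ * e1vec n a := fun a => hkey a
    have h00 : J 0 0 = (m:ℂ) * γ := by
      rw [hJ0, e1_at, if_pos rfl, mul_one]
    have step1 : J.charpoly = (Polynomial.X - Polynomial.C ((m:ℂ)*γ)) *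
        (J.submatrix Fin.succ Fin.succ).charpoly := by
      rw [charpoly_firstCol J (fun a ha => by rw [hJ0, e1_at, if_neg ha, mul_zero]), h00]
    have hA : (J.submatrix Fin.succ Fin.succ).charpoly =
        ∏ i : Fin N, (Polynomial.X - Polynomial.C (β i)) := by
      have hc := hchar
      rw [step1] at hc
      exact mul_left_cancel₀ (Polynomial.X_sub_C_ne_zero _) hc
    have hsub : (ptJac n m f).submatrix Fin.castSucc Fin.castSucc =
        J.submatrix Fin.succ Fin.succ - γ • 1 := by
      ext a b
      rw [Matrix.submatrix_apply, ptJac_entry, hG0]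
      have hlt : ((Fin.castSucc a : Fin n) : ℕ) + 1 < n := by
        have := a.isLt
        simp only [Fin.coe_castSucc]
        omega
      rw [dif_pos hlt]
      have hb : (Fin.castSucc b).succ = Fin.castSucc (Fin.succ b) := by
        ext; simp
      have ha' : (⟨((Fin.castSucc a : Fin n) : ℕ) + 1, hlt⟩ : Fin n) = a.succ := by
        ext; simp
      rw [ha', hb, eval0_pderiv_sfo n m f a.succ b.succ (by simp)]
      have : J.submatrix Fin.succ Fin.succ a b =
          eval (e1vec n) (pderiv b.succ (topPart n m f a.succ)) := rfl
      rw [Matrix.sub_apply, this, Matrix.smul_apply, Matrix.one_apply]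
      by_cases hab : a = b
      · subst hab
        simp
        ring
      · rw [if_neg (by simpa [Fin.castSucc_inj] using hab), if_neg hab]
        simp
    have hlastrow : ∀ b, b ≠ Fin.last N → ptJac n m f (Fin.last N) b = 0 := by
      intro b hb
      rw [ptJac_entry, hG0, dif_neg (by simp [hn]), if_neg (fun h => hb h.symm)]
      ring
    have hlastlast : ptJac n m f (Fin.last N) (Fin.last N) = -γ := by
      rw [ptJac_entry, hG0, dif_neg (by simp [hn]), if_pos rfl]
      ring
    rw [charpoly_lastRow _ hlastrow, hlastlast, hsub,
      charpoly_shift (J.submatrix Fin.succ Fin.succ) γ β hA, map_neg, sub_neg_eq_add]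
    rfl
end
end
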